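/- arXiv:1310.3861 — 8 statements merged into one kernel-verified Lean document; each statement's English description precedes it below -/
import Mathlib

section
/- If f : G → ℝ is a homogeneous quasimorphism with defect at most D, and f(g) = 1 for some g ∈ G, then the stable commutator length of g satisfies scl(g) ≥ 1/(2D). -/
open scoped ENNReal
open scoped commutatorElement

/-- `g` is a product of `n` commutators. -/
def IsProdCommutators {G : Type*} [Group G] (g : G) (n : ℕ) : Prop :=
  ∃ a b : Fin n → G, g = (List.ofFn (fun i => ⁅a i, b i⁆)).prod

/-- Commutator length, valued in `ℝ≥0∞` (`∞` if `g` is not a product of commutators). -/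
noncomputable def cl {G : Type*} [Group G] (g : G) : ℝ≥0∞ :=
  sInf ((fun n : ℕ => (n : ℝ≥0∞)) '' {n | IsProdCommutators g n})

/-- Stable commutator length: the limit (= infimum, by subadditivity) of `cl(gⁿ)/n`. -/
noncomputable def scl {G : Type*} [Group G] (g : G) : ℝ≥0∞ :=
  ⨅ n : ℕ+, cl (g ^ (n : ℕ)) / (n : ℕ+)

private lemma aux_nonpos_of_forall_nat_mul_le {x b : ℝ}
    (h : ∀ n : ℕ, (n : ℝ) * x ≤ b) : x ≤ 0 := by
  by_contra hx
  push_neg at hx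
  obtain ⟨n, hn⟩ := exists_nat_gt (b / x)
  have h1 := h n
  rw [div_lt_iff₀ hx] at hn
  linarith

section Aux

variable {G : Type*} [Group G] {f : G → ℝ} {D : ℝ}

lemma aux_f_one (hhom : ∀ (g : G) (n : ℤ), f (g ^ n) = n * f g) : f (1 : G) = 0 := by
  have := hhom 1 0
  simpa using this

lemma aux_f_inv (hhom : ∀ (g : G) (n : ℤ), f (g ^ n) = n * f g) (g : G) :
    f g⁻¹ = - f g := by
  have := hhom g (-1)
  simpa using this

lemma aux_f_conj (hqm : ∀ g h : G, |f (g * h) - f g - f h| ≤ D)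
    (hhom : ∀ (g : G) (n : ℤ), f (g ^ n) = n * f g) (h g : G) :
    f (h * g * h⁻¹) = f g := by
  have key : ∀ n : ℕ, (n : ℝ) * |f (h * g * h⁻¹) - f g| ≤ 2 * D := by
    intro n
    have h1 := hqm h (g ^ n * h⁻¹)
    have h2 := hqm (g ^ n) h⁻¹
    have hc : (h * g * h⁻¹) ^ n = h * (g ^ n * h⁻¹) := by
      rw [conj_pow]; group
    have e1 : f ((h * g * h⁻¹) ^ n) = n * f (h * g * h⁻¹) := by
      have := hhom (h * g * h⁻¹) n; simpa using this
    have e2 : f (g ^ n) = n * f g := by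
      have := hhom g n; simpa using this
    have e3 : f h⁻¹ = - f h := aux_f_inv hhom h
    have hsum : (n : ℝ) * (f (h * g * h⁻¹) - f g)
        = (f (h * (g ^ n * h⁻¹)) - f h - f (g ^ n * h⁻¹))
          + (f (g ^ n * h⁻¹) - f (g ^ n) - f h⁻¹) := by
      rw [← hc, e1, e2, e3]; ring
    have habs : |(n : ℝ) * (f (h * g * h⁻¹) - f g)| ≤ 2 * D := by
      rw [hsum]
      calc |_ + _| ≤ _ + _ := abs_add_le _ _
        _ ≤ 2 * D := by linarith
    rw [abs_mul, Nat.abs_cast] at habs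
    exact habs
  have := aux_nonpos_of_forall_nat_mul_le key
  have h0 : |f (h * g * h⁻¹) - f g| = 0 := le_antisymm this (abs_nonneg _)
  have := abs_eq_zero.mp h0
  linarith

lemma aux_f_comm (hqm : ∀ g h : G, |f (g * h) - f g - f h| ≤ D)
    (hhom : ∀ (g : G) (n : ℤ), f (g ^ n) = n * f g) (a b : G) :
    |f ⁅a, b⁆| ≤ D := by
  have h1 := hqm (a * b * a⁻¹) b⁻¹
  rw [aux_f_conj hqm hhom a b, aux_f_inv hhom b] at h1
  have : a * b * a⁻¹ * b⁻¹ = ⁅a, b⁆ := (commutatorElement_def a b).symm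
  rw [this] at h1
  simpa using h1

lemma aux_f_prod (hqm : ∀ g h : G, |f (g * h) - f g - f h| ≤ D)
    (hhom : ∀ (g : G) (n : ℤ), f (g ^ n) = n * f g) (l : List G) :
    |f l.prod| ≤ (l.map fun x => |f x|).sum + l.length * D := by
  induction l with
  | nil => simp [aux_f_one hhom]
  | cons x l ih =>
    have h1 := abs_le.mp (hqm x l.prod)
    simp only [List.prod_cons, List.map_cons, List.sum_cons, List.length_cons]
    rw [abs_le]
    push_cast
    constructor <;>
      linarith [le_abs_self (f x), neg_abs_le (f x),
        le_abs_self (f l.prod), neg_abs_le (f l.prod), ih, h1.1, h1.2]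

end Aux

/-- Bavard duality, easy direction: if `f` is a homogeneous quasimorphism with defect at
most `D` and `f g = 1`, then `scl(g) ≥ 1/(2D)`. -/
theorem scl_ge_of_quasimorphism {G : Type*} [Group G] (f : G → ℝ) (D : ℝ)
    (hqm : ∀ g h : G, |f (g * h) - f g - f h| ≤ D)
    (hhom : ∀ (g : G) (n : ℤ), f (g ^ n) = n * f g)
    (g : G) (hg : f g = 1) :
    1 / ENNReal.ofReal (2 * D) ≤ scl g := by
  have hD : 0 ≤ D := by
    have := hqm 1 1
    simp only [mul_one, aux_f_one hhom] at this
    simpa using this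
  have key : ∀ (k n : ℕ), IsProdCommutators (g ^ k) n → (k : ℝ) ≤ 2 * D * n := by
    rintro k n ⟨a, b, hab⟩
    have hfk : f (g ^ k) = (k : ℝ) := by
      have := hhom g (k : ℤ)
      rw [zpow_natCast] at this
      rw [this, hg]; push_cast; ring
    set l : List G := List.ofFn (fun i => ⁅a i, b i⁆) with hl
    have hlen : l.length = n := by simp [hl]
    have hsum : (l.map fun x => |f x|).sum ≤ (n : ℝ) * D := by
      have hmem : ∀ x ∈ l.map fun x => |f x|, x ≤ D := by
        intro x hx
        simp only [List.mem_map] at hx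
        obtain ⟨y, hy, rfl⟩ := hx
        rw [hl, List.mem_ofFn] at hy
        obtain ⟨i, rfl⟩ := hy
        exact aux_f_comm hqm hhom _ _
      have := List.sum_le_card_nsmul _ D hmem
      simpa [hlen] using this
    have hprod := aux_f_prod hqm hhom l
    rw [← hab, hfk, hlen] at hprod
    have hk : (k : ℝ) ≤ |(k : ℝ)| := le_abs_self _
    linarith
  rw [scl]
  refine le_iInf fun k => ?_
  rw [ENNReal.le_div_iff_mul_le (Or.inl (by exact_mod_cast k.ne_zero))
    (Or.inl (by simp))]
  rw [cl]
  refine le_sInf ?_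
  rintro x ⟨n, hn, rfl⟩
  have hreal : ((k : ℕ) : ℝ) ≤ 2 * D * n := key k n hn
  have h1 : ((k : ℕ) : ℝ≥0∞) ≤ (n : ℝ≥0∞) * ENNReal.ofReal (2 * D) := by
    rw [← ENNReal.ofReal_natCast (k : ℕ), ← ENNReal.ofReal_natCast n,
      ← ENNReal.ofReal_mul' (by positivity)]
    exact ENNReal.ofReal_le_ofReal (by linarith)
  calc 1 / ENNReal.ofReal (2 * D) * (k : ℕ+)
      = ((k : ℕ) : ℝ≥0∞) / ENNReal.ofReal (2 * D) := by
        rw [one_div, div_eq_mul_inv, mul_comm]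
    _ ≤ (n : ℝ≥0∞) := by
        rw [ENNReal.div_le_iff_le_mul (Or.inr (by simp)) (Or.inl ENNReal.ofReal_ne_top)]
        exact h1
end

section
/- If f : G → ℝ is a homogeneous quasimorphism with defect at most D, and gⁿ is a product of m commutators in G, then |f(g)| ≤ 2mD/n. -/
open scoped commutatorElement
/-- If `f : G → ℝ` is a homogeneous quasimorphism with defect at most `D`, and `gⁿ` is a
product of `m` commutators, then `|f(g)| ≤ 2mD/n`. -/
theorem abs_le_of_prod_commutators {G : Type*} [Group G] (f : G → ℝ) (D : ℝ)
    (hqm : ∀ g h : G, |f (g * h) - f g - f h| ≤ D)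
    (hhom : ∀ (g : G) (n : ℤ), f (g ^ n) = n * f g)
    (g : G) (m n : ℕ) (hn : n ≠ 0) (h : IsProdCommutators (g ^ n) m) :
    |f g| ≤ 2 * m * D / n := by
  have f1 : f 1 = 0 := by have := hhom 1 0; simpa using this
  have hD : 0 ≤ D := by
    have := hqm 1 1
    rw [one_mul, f1] at this
    simpa using this
  have finv : ∀ x : G, f x⁻¹ = -f x := by
    intro x
    have := hhom x (-1)
    simpa using this
  -- conjugation invariance
  have fconj : ∀ h x : G, f (h * x * h⁻¹) = f x := by
    intro h x
    have key : ∀ k : ℕ, (k : ℝ) * |f (h * x * h⁻¹) - f x| ≤ 2 * D := by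
      intro k
      have hpow : (h * x * h⁻¹) ^ (k : ℤ) = h * x ^ (k : ℤ) * h⁻¹ := by
        rw [conj_zpow]
      have h1 := hqm (h * x ^ (k : ℤ)) h⁻¹
      have h2 := hqm h (x ^ (k : ℤ))
      have e1 : f ((h * x * h⁻¹) ^ (k : ℤ)) = (k : ℝ) * f (h * x * h⁻¹) := by
        have := hhom (h * x * h⁻¹) k; simpa using this
      have e2 : f (x ^ (k : ℤ)) = (k : ℝ) * f x := by
        have := hhom x k; simpa using this
      rw [finv h] at h1
      have : |(k : ℝ) * f (h * x * h⁻¹) - (k : ℝ) * f x| ≤ 2 * D := by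
        rw [← e1, ← e2, hpow]
        calc |f (h * x ^ (k:ℤ) * h⁻¹) - f (x ^ (k:ℤ))|
            = |(f (h * x ^ (k:ℤ) * h⁻¹) - f (h * x ^ (k:ℤ)) - -f h)
              + (f (h * x ^ (k:ℤ)) - f h - f (x ^ (k:ℤ)))| := by ring_nf
          _ ≤ |f (h * x ^ (k:ℤ) * h⁻¹) - f (h * x ^ (k:ℤ)) - -f h|
              + |f (h * x ^ (k:ℤ)) - f h - f (x ^ (k:ℤ))| := abs_add_le _ _
          _ ≤ D + D := add_le_add h1 h2
          _ = 2 * D := by ring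
      calc (k : ℝ) * |f (h * x * h⁻¹) - f x|
          = |(k : ℝ) * f (h * x * h⁻¹) - (k : ℝ) * f x| := by
            rw [← mul_sub, abs_mul, Nat.abs_cast]
        _ ≤ 2 * D := this
    by_contra hne
    have habs : 0 < |f (h * x * h⁻¹) - f x| := by
      rw [abs_pos]; intro hc; exact hne (by linarith [sub_eq_zero.mp hc])
    obtain ⟨k, hk⟩ := exists_nat_gt (2 * D / |f (h * x * h⁻¹) - f x|)
    have := key k
    have h2 : 2 * D / |f (h * x * h⁻¹) - f x| < (k : ℝ) := hk
    rw [div_lt_iff₀ habs] at h2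
    linarith
  -- commutator bound
  have fcomm : ∀ a b : G, |f ⁅a, b⁆| ≤ D := by
    intro a b
    have h1 := hqm (a * b * a⁻¹) b⁻¹
    rw [fconj a b, finv b] at h1
    have e : ⁅a, b⁆ = a * b * a⁻¹ * b⁻¹ := by group
    rw [e]
    simpa using h1
  -- list lemma
  have flist : ∀ l : List G, (∀ x ∈ l, |f x| ≤ D) → |f l.prod| ≤ 2 * l.length * D := by
    intro l
    induction l with
    | nil => intro _; simp [f1]
    | cons a t ih =>
      intro hl
      have ha : |f a| ≤ D := hl a (by simp)
      have ht := ih (fun x hx => hl x (by simp [hx]))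
      have hq := hqm a t.prod
      have : |f (a * t.prod)| ≤ |f (a * t.prod) - f a - f t.prod| + |f a| + |f t.prod| := by
        have := abs_add_le (f (a * t.prod) - f a - f t.prod + f a) (f t.prod)
        have := abs_add_le (f (a * t.prod) - f a - f t.prod) (f a)
        calc |f (a * t.prod)| = |(f (a * t.prod) - f a - f t.prod) + f a + f t.prod| := by
              ring_nf
          _ ≤ |(f (a * t.prod) - f a - f t.prod) + f a| + |f t.prod| := abs_add_le _ _
          _ ≤ |f (a * t.prod) - f a - f t.prod| + |f a| + |f t.prod| := by
              have := abs_add_le (f (a * t.prod) - f a - f t.prod) (f a); linarith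
      simp only [List.prod_cons, List.length_cons]
      push_cast
      calc |f (a * t.prod)| ≤ |f (a * t.prod) - f a - f t.prod| + |f a| + |f t.prod| := this
        _ ≤ D + D + 2 * t.length * D := by
            have : |f t.prod| ≤ 2 * t.length * D := ht
            linarith
        _ ≤ 2 * ((t.length : ℝ) + 1) * D := le_of_eq (by ring)
  obtain ⟨a, b, hab⟩ := h
  have hlen : (List.ofFn (fun i => ⁅a i, b i⁆)).length = m := by simp
  have hbound : |f (g ^ n)| ≤ 2 * m * D := by
    rw [hab]
    have := flist (List.ofFn (fun i => ⁅a i, b i⁆)) (by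
      intro x hx
      rw [List.mem_ofFn] at hx
      obtain ⟨i, rfl⟩ := hx
      exact fcomm _ _)
    rwa [hlen] at this
  have hfn : f (g ^ n) = (n : ℝ) * f g := by
    have := hhom g n; simpa using this
  rw [hfn, abs_mul, abs_of_nonneg (Nat.cast_nonneg n)] at hbound
  have hn' : (0 : ℝ) < n := by positivity
  rw [le_div_iff₀ hn']
  linarith [hbound]
end

section
/- In any group G, if elements t and a satisfy t·aᵐ·t⁻¹ = aˡ with m ≠ ℓ, then the stable commutator length of a is zero. -/
open scoped ENNReal
open scoped commutatorElement

/-- In any group, if `t aᵐ t⁻¹ = aˡ` with `m ≠ ℓ`, then `scl(a) = 0`. -/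
theorem scl_eq_zero_of_baumslag_solitar_relation {G : Type*} [Group G] (t a : G)
    (m l : ℤ) (hml : m ≠ l) (rel : t * a ^ m * t⁻¹ = a ^ l) :
    scl a = 0 := by
  set d : ℤ := l - m with hd
  have hd0 : d ≠ 0 := sub_ne_zero.mpr (Ne.symm hml)
  have hdpos : 0 < d.natAbs := Int.natAbs_pos.mpr hd0
  -- key: for every `n`, `a ^ (|d| * n)` is a single commutator
  have conj : ∀ e : ℤ, t * a ^ (m * e) * t⁻¹ = a ^ (l * e) := by
    intro e
    rw [zpow_mul, zpow_mul, ← rel, conj_zpow]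
  -- key: for every `n`, `a ^ (|d| * n)` is a single commutator
  have key : ∀ n : ℕ, cl (a ^ (d.natAbs * n : ℕ)) ≤ 1 := by
    intro n
    obtain ⟨e, hde⟩ : ∃ e : ℤ, ((d.natAbs * n : ℕ) : ℤ) = d * e := by
      rcases Int.natAbs_eq d with h | h
      · exact ⟨n, by rw [Nat.cast_mul, ← h]⟩
      · refine ⟨-n, ?_⟩
        have h' : (d.natAbs : ℤ) = -d := by omega
        rw [Nat.cast_mul, h']; ring
    have hcomm : a ^ (d.natAbs * n : ℕ) = ⁅t, a ^ (m * e)⁆ := by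
      rw [commutatorElement_def, conj e, ← zpow_natCast, hde, ← zpow_neg,
        ← zpow_add]
      congr 1
      rw [hd]; ring
    have hmem : IsProdCommutators (a ^ (d.natAbs * n : ℕ)) 1 :=
      ⟨fun _ => t, fun _ => a ^ (m * e), by simp [hcomm]⟩
    unfold cl
    exact sInf_le ⟨1, hmem, by norm_num⟩
  refine le_antisymm ?_ zero_le
  refine ENNReal.le_of_forall_pos_le_add fun ε hε _ => ?_
  obtain ⟨n, hn⟩ := ENNReal.exists_inv_nat_lt
    (show (ε : ℝ≥0∞) ≠ 0 by exact_mod_cast hε.ne')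
  set N : ℕ+ := ⟨d.natAbs * (n + 1), Nat.mul_pos hdpos n.succ_pos⟩ with hN
  have h1 : scl a ≤ cl (a ^ (N : ℕ)) / (N : ℕ+) := iInf_le _ N
  have h2 : cl (a ^ (N : ℕ)) / (N : ℕ+) ≤ 1 / (N : ℝ≥0∞) := by
    exact ENNReal.div_le_div_right (key (n + 1)) _
  have h3 : (1 : ℝ≥0∞) / (N : ℝ≥0∞) ≤ (n : ℝ≥0∞)⁻¹ := by
    rw [one_div]
    refine ENNReal.inv_le_inv.mpr ?_
    have : (n : ℕ) ≤ (N : ℕ) := by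
      calc n ≤ n + 1 := Nat.le_succ n
      _ ≤ d.natAbs * (n + 1) := Nat.le_mul_of_pos_left _ hdpos
    exact_mod_cast this
  calc scl a ≤ (n : ℝ≥0∞)⁻¹ := h1.trans (h2.trans h3)
  _ ≤ 0 + ε := by simpa using hn.le
end

section
/- Let G act on a tree T and let g, h ∈ G both fix a common vertex v of T. If the stabilizer of each edge incident to v is central in the stabilizer of v, then for any subtree S containing v, the pointwise stabilizer of S equals the pointwise stabilizer of hS. -/
set_option linter.unusedVariables false

variable {V : Type*}

/-- A group `G` acts on the simplicial tree `T` by graph automorphisms, without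
inversions. -/
def IsTreeAction (T : SimpleGraph V) (G : Type*) [Group G] [MulAction G V] : Prop :=
  T.IsTree ∧ (∀ (g : G) (u v : V), T.Adj u v → T.Adj (g • u) (g • v)) ∧
    (∀ (g : G) (u v : V), T.Adj u v → ¬(g • u = v ∧ g • v = u))

/-- `w` lies on the geodesic segment from `u` to `v`. -/
def OnSeg (T : SimpleGraph V) (u w v : V) : Prop :=
  T.dist u w + T.dist w v = T.dist u v

/-- `g` is elliptic: it fixes a vertex of `T`. -/
def Elliptic (T : SimpleGraph V) {G : Type*} [Group G] [MulAction G V] (g : G) : Prop :=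
  ∃ v : V, g • v = v

/-- The translation length of `g`: the minimal displacement of a vertex. -/
noncomputable def transLen (T : SimpleGraph V) {G : Type*} [Group G] [MulAction G V]
    (g : G) : ℕ :=
  sInf {n : ℕ | ∃ v : V, T.dist v (g • v) = n}

/-- The characteristic subtree (the axis, for hyperbolic `g`): the set of vertices of
minimal displacement. -/
def Axis (T : SimpleGraph V) {G : Type*} [Group G] [MulAction G V] (g : G) : Set V :=
  {v : V | T.dist v (g • v) = transLen T g}

/-- For `p, q` on the axis of a hyperbolic `g`: `q` lies (weakly) in the positive
`g`-direction from `p`. -/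
def Ahead (T : SimpleGraph V) {G : Type*} [Group G] [MulAction G V] (g : G)
    (p q : V) : Prop :=
  T.dist p (g • q) = T.dist p q + transLen T g

lemma fix_conj_aux {V : Type*} (T : SimpleGraph V) {G : Type*} [Group G]
    [MulAction G V] (hconn : T.Connected)
    (S : Set V) (v : V) (hv : v ∈ S)
    (hsub : ∀ u w, u ∈ S → w ∈ S → ∀ x, OnSeg T u x w → x ∈ S)
    (h : G) (hh : h • v = v)
    (hcent : ∀ u : V, T.Adj v u → ∀ c x : G,
      c • v = v → c • u = u → x • v = v → c * x = x * c)
    (g : G) (hg : ∀ x ∈ S, g • x = x) :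
    ∀ x ∈ S, g • (h • x) = h • x := by
  intro x hx
  by_cases hvx : v = x
  · subst hvx
    rw [hh, hg v hx]
  · obtain ⟨p, hp⟩ := (hconn v x).exists_walk_length_eq_dist
    have hlen : 0 < p.length := by
      rcases p with _ | _
      · exact absurd rfl hvx
      · simp [SimpleGraph.Walk.length_cons]
    cases p with
    | nil => simp at hlen
    | cons ha q =>
      rename_i u
      have hdu : T.dist v u ≤ 1 := le_trans (SimpleGraph.dist_le (ha.toWalk)) (by simp)
      have hdx : T.dist u x ≤ q.length := SimpleGraph.dist_le q
      have htri : T.dist v x ≤ T.dist v u + T.dist u x := hconn.dist_triangle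
      have hdvx : T.dist v x = q.length + 1 := by
        simpa [SimpleGraph.Walk.length_cons] using hp.symm
      have hseg : OnSeg T v u x := by
        unfold OnSeg; omega
      have hu : u ∈ S := hsub v x hv hx u hseg
      have hcomm : g * h = h * g := hcent u ha g h (hg v hv) (hg u hu) hh
      calc g • (h • x) = (g * h) • x := (mul_smul g h x).symm
        _ = (h * g) • x := by rw [hcomm]
        _ = h • (g • x) := mul_smul h g x
        _ = h • x := by rw [hg x hx]

/-- If `h` fixes a vertex `v` of a subtree `S`, and the stabilizer of each edge at `v` is
central in the stabilizer of `v`, then the pointwise stabilizer of `S` equals the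
pointwise stabilizer of `h • S`. -/
theorem pointwise_stabilizer_rotate {V : Type*} (T : SimpleGraph V) {G : Type*} [Group G]
    [MulAction G V] (hT : IsTreeAction T G)
    (S : Set V) (v : V) (hv : v ∈ S)
    (hsub : ∀ u w, u ∈ S → w ∈ S → ∀ x, OnSeg T u x w → x ∈ S)
    (h : G) (hh : h • v = v)
    (hcent : ∀ u : V, T.Adj v u → ∀ c x : G,
      c • v = v → c • u = u → x • v = v → c * x = x * c) :
    ∀ g : G, (∀ x ∈ S, g • x = x) ↔ (∀ x ∈ S, g • (h • x) = h • x) := by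
  intro g
  have hconn : T.Connected := hT.1.isConnected
  constructor
  · intro hg
    exact fix_conj_aux T hconn S v hv hsub h hh hcent g hg
  · intro hg
    have hh' : h⁻¹ • v = v := by rw [inv_smul_eq_iff]; exact hh.symm
    have hg' : ∀ x ∈ S, (h⁻¹ * g * h) • x = x := by
      intro x hx
      rw [mul_smul, mul_smul, hg x hx, inv_smul_smul]
    have := fix_conj_aux T hconn S v hv hsub h⁻¹ hh' hcent (h⁻¹ * g * h) hg'
    intro x hx
    have hx' := this x hx
    rw [mul_smul, mul_smul] at hx'
    have : g • (h • (h⁻¹ • x)) = h • (h⁻¹ • x) := by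
      rw [← mul_smul h h⁻¹]
      simpa using congrArg (h • ·) hx'
    simpa using this
end

section
/- Suppose a group G acts on a tree T, scl vanishes on all elliptic elements of G, g ∈ G is hyperbolic, and there exists h ∈ G such that h maps the axis of g to itself reversing orientation (equivalently, hgh⁻¹ acts on the axis of g as a translation of the same length in the opposite direction, so gⁿhgⁿh⁻¹ is elliptic for all n). Then scl(g) = 0. -/
open scoped ENNReal commutatorElement

set_option linter.unusedVariables false

variable {V : Type*}

namespace SclAux
variable {G : Type*} [Group G]

variable {G : Type*} [Group G]

/-- List form of `IsProdCommutators`. -/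
def PC (g : G) (n : ℕ) : Prop :=
  ∃ l : List G, l.length = n ∧ (∀ z ∈ l, ∃ a b : G, z = ⁅a, b⁆) ∧ g = l.prod

theorem isPC_iff_PC (g : G) (n : ℕ) : IsProdCommutators g n ↔ PC g n := by
  constructor
  · rintro ⟨a, b, rfl⟩
    refine ⟨List.ofFn (fun i => ⁅a i, b i⁆), by simp, ?_, rfl⟩
    intro z hz
    rw [List.mem_ofFn] at hz
    obtain ⟨i, rfl⟩ := hz
    exact ⟨a i, b i, rfl⟩
  · rintro ⟨l, hlen, hcomm, rfl⟩
    subst hlen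
    choose a b hab using hcomm
    refine ⟨fun i => a (l.get i) (List.get_mem l i),
      fun i => b (l.get i) (List.get_mem l i), ?_⟩
    congr 1
    refine List.ext_getElem (by simp) ?_
    intro j h1 h2
    simp only [List.getElem_ofFn]
    exact hab _ _

theorem PC.one : PC (1 : G) 0 := ⟨[], rfl, by simp, by simp⟩

theorem PC.mul {x y : G} {p q : ℕ} (hx : PC x p) (hy : PC y q) : PC (x * y) (p + q) := by
  obtain ⟨l, hl, hlc, rfl⟩ := hx
  obtain ⟨l', hl', hlc', rfl⟩ := hy
  exact ⟨l ++ l', by simp [hl, hl'], by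
    intro z hz; rcases List.mem_append.1 hz with h | h
    exacts [hlc z h, hlc' z h], by simp⟩

theorem PC.pow_comm (a b : G) (m : ℕ) : PC (⁅a, b⁆ ^ m) m := by
  refine ⟨List.replicate m ⁅a, b⁆, by simp, ?_, by simp⟩
  intro z hz
  rw [List.eq_of_mem_replicate hz]
  exact ⟨a, b, rfl⟩

theorem conj_list_prod (t : G) (l : List G) :
    (l.map fun z => t * z * t⁻¹).prod = t * l.prod * t⁻¹ := by
  induction l with
  | nil => simp
  | cons hd tl ih =>
    rw [List.map_cons, List.prod_cons, List.prod_cons, ih]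
    group

theorem PC.conj {x : G} {n : ℕ} (t : G) (hx : PC x n) : PC (t * x * t⁻¹) n := by
  obtain ⟨l, hl, hlc, rfl⟩ := hx
  refine ⟨l.map (fun z => t * z * t⁻¹), by simp [hl], ?_, ?_⟩
  · intro z hz
    rw [List.mem_map] at hz
    obtain ⟨w, hw, rfl⟩ := hz
    obtain ⟨a, b, rfl⟩ := hlc w hw
    exact ⟨t * a * t⁻¹, t * b * t⁻¹, by group⟩
  · exact (conj_list_prod t l).symm

theorem cl_le {g : G} {n : ℕ} (h : PC g n) : cl g ≤ n :=
  sInf_le ⟨n, (isPC_iff_PC g n).2 h, rfl⟩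

theorem cl_exists {g : G} (h : cl g ≠ ⊤) : ∃ n : ℕ, PC g n ∧ cl g = n := by
  have hne : {n : ℕ | IsProdCommutators g n}.Nonempty := by
    by_contra hemp
    rw [Set.not_nonempty_iff_eq_empty] at hemp
    apply h
    simp [cl, hemp]
  refine ⟨sInf {n : ℕ | IsProdCommutators g n},
    (isPC_iff_PC g _).1 (Nat.sInf_mem hne), le_antisymm ?_ ?_⟩
  · exact sInf_le ⟨_, Nat.sInf_mem hne, rfl⟩
  · refine le_sInf ?_
    rintro y ⟨m, hm, rfl⟩
    exact_mod_cast Nat.cast_le.2 (Nat.sInf_le hm)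

/-- key decomposition: (a*c)^(m+1) = a^(m+1) * (product of m commutators) * c^(m+1) -/
theorem key_decomp (a c : G) (m : ℕ) :
    ∃ d : G, PC d m ∧ (a * c) ^ (m + 1) = a ^ (m + 1) * d * c ^ (m + 1) := by
  induction m with
  | zero => exact ⟨1, PC.one, by group⟩
  | succ m ih =>
    obtain ⟨d, hd, hm⟩ := ih
    refine ⟨⁅a⁻¹, d * c ^ (m + 1)⁆ * d,
      by simpa [pow_one, Nat.add_comm] using (PC.pow_comm a⁻¹ (d * c ^ (m + 1)) 1).mul hd, ?_⟩
    have : (a * c) ^ (m + 1 + 1) = (a * c) ^ (m + 1) * (a * c) := by rw [pow_succ]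
    rw [this, hm]
    have h1 : a ^ (m + 1 + 1) = a ^ (m + 1) * a := by rw [pow_succ]
    have h2 : c ^ (m + 1 + 1) = c ^ (m + 1) * c := by rw [pow_succ]
    rw [h1, h2, commutatorElement_def]
    group

theorem scl_le_cl (g : G) (N : ℕ+) : scl g ≤ cl (g ^ (N : ℕ)) / ((N : ℕ) : ℝ≥0∞) :=
  iInf_le _ N

theorem exists_pow_cl_le {a : G} (sa : scl a = 0) : ∃ m : ℕ+, cl (a ^ (m : ℕ)) ≤ (m : ℕ) := by
  have : scl a < 1 := by rw [sa]; norm_num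
  rw [scl, iInf_lt_iff] at this
  obtain ⟨m, hm⟩ := this
  refine ⟨m, ?_⟩
  rw [ENNReal.div_lt_iff (Or.inl (by exact_mod_cast m.ne_zero)) (Or.inl (by simp))] at hm
  rw [one_mul] at hm
  exact hm.le

theorem eq_zero_of_le_two_div (x : ℝ≥0∞) (hx : ∀ n : ℕ+, x ≤ 2 / ((n : ℕ) : ℝ≥0∞)) :
    x = 0 := by
  by_contra hx0
  obtain ⟨n, hn⟩ := ENNReal.exists_inv_nat_lt (a := x / 2)
    (by simp [ENNReal.div_eq_zero_iff, hx0])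
  have hn0 : 0 < n := by
    rcases Nat.eq_zero_or_pos n with rfl | hp
    · simp at hn
    · exact hp
  have hle := hx ⟨n, hn0⟩
  have h2 : (2 : ℝ≥0∞) / n = 2 * (n : ℝ≥0∞)⁻¹ := by rw [ENNReal.div_eq_inv_mul, mul_comm]
  have hlt : (2 : ℝ≥0∞) * (n : ℝ≥0∞)⁻¹ < 2 * (x / 2) := by
    refine ENNReal.mul_lt_mul_iff_right (by norm_num) (by norm_num) |>.2 hn
  rw [ENNReal.mul_div_cancel (by norm_num) (by norm_num)] at hlt
  exact absurd hle (not_le.2 (by calc (2:ℝ≥0∞)/(⟨n,hn0⟩ : ℕ+) = 2 * (n:ℝ≥0∞)⁻¹ := h2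
    _ < x := hlt))

end SclAux

namespace TreeAux

variable {T : SimpleGraph V}


variable {T : SimpleGraph V}

theorem isPath_of_length_eq_dist {u v : V} (p : T.Walk u v) (hp : p.length = T.dist u v) :
    p.IsPath := by
  classical
  induction p with
  | nil => exact SimpleGraph.Walk.IsPath.nil
  | @cons u w v hadj q ih =>
    rw [SimpleGraph.Walk.length_cons] at hp
    have hreach : T.Reachable w v := ⟨q⟩
    obtain ⟨q', hq'⟩ := hreach.exists_walk_length_eq_dist
    have hqlen : q.length = T.dist w v := by
      refine le_antisymm ?_ (SimpleGraph.dist_le q)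
      by_contra hlt
      push_neg at hlt
      have : T.dist u v ≤ (SimpleGraph.Walk.cons hadj q').length := SimpleGraph.dist_le _
      rw [SimpleGraph.Walk.length_cons, hq'] at this
      omega
    have hqpath := ih hqlen
    rw [SimpleGraph.Walk.cons_isPath_iff]
    refine ⟨hqpath, fun hmem => ?_⟩
    have : T.dist u v ≤ (q.dropUntil u hmem).length := SimpleGraph.dist_le _
    have hle := SimpleGraph.Walk.length_dropUntil_le q hmem
    omega

theorem onSeg_unique (hT : T.IsTree) {x z a b : V}
    (ha : OnSeg T x a z) (hb : OnSeg T x b z) (hd : T.dist x a = T.dist x b) : a = b := by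
  have conn := hT.isConnected
  obtain ⟨p1, hp1⟩ := conn.exists_walk_length_eq_dist x a
  obtain ⟨p2, hp2⟩ := conn.exists_walk_length_eq_dist a z
  obtain ⟨q1, hq1⟩ := conn.exists_walk_length_eq_dist x b
  obtain ⟨q2, hq2⟩ := conn.exists_walk_length_eq_dist b z
  have hwlen : (p1.append p2).length = T.dist x z := by
    rw [SimpleGraph.Walk.length_append, hp1, hp2, ha]
  have hw'len : (q1.append q2).length = T.dist x z := by
    rw [SimpleGraph.Walk.length_append, hq1, hq2, hb]
  have hw : (p1.append p2).IsPath := isPath_of_length_eq_dist _ hwlen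
  have hw' : (q1.append q2).IsPath := isPath_of_length_eq_dist _ hw'len
  have heq : p1.append p2 = q1.append q2 := (hT.existsUnique_path x z).unique hw hw'
  have hget : (p1.append p2).getVert (T.dist x a) = a := by
    rw [SimpleGraph.Walk.getVert_append]
    rw [← hp1]
    simp [SimpleGraph.Walk.getVert_length]
  have hget' : (q1.append q2).getVert (T.dist x b) = b := by
    rw [SimpleGraph.Walk.getVert_append]
    rw [← hq1]
    simp [SimpleGraph.Walk.getVert_length]
  rw [← hget, ← hget', heq, hd]

theorem dist_smul {G : Type*} [Group G] [MulAction G V] (conn : T.Connected)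
    (hadj : ∀ (g : G) (u v : V), T.Adj u v → T.Adj (g • u) (g • v))
    (g : G) (u v : V) : T.dist (g • u) (g • v) = T.dist u v := by
  have key : ∀ (k : G) (a b : V), T.dist (k • a) (k • b) ≤ T.dist a b := by
    intro k a b
    obtain ⟨p, hp⟩ := conn.exists_walk_length_eq_dist a b
    let f : T →g T := ⟨fun x => k • x, fun {x y} hxy => hadj k x y hxy⟩
    have := SimpleGraph.dist_le (p.map f)
    rwa [SimpleGraph.Walk.length_map, hp] at this
  refine le_antisymm (key g u v) ?_
  have := key g⁻¹ (g • u) (g • v)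
  simpa using this

end TreeAux

/-- If `scl` vanishes on elliptic elements, `g` is hyperbolic, and some `h` maps the axis
of `g` to itself reversing the orientation (so that `h g h⁻¹` translates along the axis of
`g` with the same length in the opposite direction), then `scl(g) = 0`. -/
theorem scl_zero_of_axis_reversed {V : Type*} (T : SimpleGraph V) {G : Type*} [Group G]
    [MulAction G V] (hT : IsTreeAction T G)
    (hell : ∀ x : G, Elliptic T x → scl x = 0)
    (g : G) (hg : ¬ Elliptic T g) (h : G)
    (hrev : ∀ v ∈ Axis T g, h • v ∈ Axis T g ∧ Ahead T g (h • (g • v)) (h • v)) :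
    scl g = 0 := by
  classical
  obtain ⟨hTree, hadj, hninv⟩ := hT
  have conn := hTree.isConnected
  have hiso : ∀ (k : G) (u v : V), T.dist (k • u) (k • v) = T.dist u v :=
    TreeAux.dist_smul conn hadj
  -- an axis point exists
  have hVne : Nonempty V := conn.nonempty
  obtain ⟨v₀⟩ := hVne
  have hSne : {n : ℕ | ∃ v : V, T.dist v (g • v) = n}.Nonempty := ⟨_, v₀, rfl⟩
  obtain ⟨w₀, hw₀⟩ := Nat.sInf_mem hSne
  have hw₀ax : w₀ ∈ Axis T g := hw₀
  -- the axis is g-invariant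
  have smul_axis : ∀ v ∈ Axis T g, g • v ∈ Axis T g := by
    intro v hv
    show T.dist (g • v) (g • (g • v)) = transLen T g
    rw [hiso g v (g • v)]
    exact hv
  have pow_axis : ∀ (k : ℕ), ∀ v ∈ Axis T g, (g ^ k) • v ∈ Axis T g := by
    intro k
    induction k with
    | zero => intro v hv; simpa using hv
    | succ k ih =>
      intro v hv
      rw [pow_succ', mul_smul]
      exact smul_axis _ (ih v hv)
  -- the key geometric step
  have step : ∀ u ∈ Axis T g, g • (h • (g • u)) = h • u := by
    intro u hu
    set L := transLen T g with hL
    have hgu : g • u ∈ Axis T g := smul_axis u hu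
    have hx : h • (g • u) ∈ Axis T g := (hrev (g • u) hgu).1
    have hy : h • u ∈ Axis T g := (hrev u hu).1
    have hahead : T.dist (h • (g • u)) (g • (h • u)) =
        T.dist (h • (g • u)) (h • u) + L := (hrev u hu).2
    have hxy : T.dist (h • (g • u)) (h • u) = L := by
      rw [hiso h (g • u) u, SimpleGraph.dist_comm]
      exact hu
    have hdx : T.dist (h • (g • u)) (g • (h • (g • u))) = L := hx
    have hdy : T.dist (h • u) (g • (h • u)) = L := hy
    have hgxy : T.dist (g • (h • (g • u))) (g • (h • u)) = L := by
      rw [hiso g]; exact hxy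
    have hseg1 : OnSeg T (h • (g • u)) (g • (h • (g • u))) (g • (h • u)) := by
      unfold OnSeg
      rw [hdx, hgxy, hahead, hxy]
    have hseg2 : OnSeg T (h • (g • u)) (h • u) (g • (h • u)) := by
      unfold OnSeg
      rw [hxy, hdy, hahead, hxy]
    exact TreeAux.onSeg_unique hTree hseg1 hseg2 (by rw [hdx, hxy])
  -- iterate the key step
  have claim : ∀ (k : ℕ), ∀ v ∈ Axis T g, h • ((g ^ k) • v) = (g ^ k)⁻¹ • (h • v) := by
    intro k
    induction k with
    | zero => intro v hv; simp
    | succ k ih =>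
      intro v hv
      have hu : (g ^ k) • v ∈ Axis T g := pow_axis k v hv
      have hstep := step _ hu
      have : h • (g • ((g ^ k) • v)) = g⁻¹ • (h • ((g ^ k) • v)) := by
        rw [← hstep, inv_smul_smul]
      rw [pow_succ', mul_smul, this, ih v hv, ← mul_smul, ← mul_inv_rev, ← pow_succ, pow_succ']
  -- each gⁿ h gⁿ h⁻¹ is elliptic
  have hell_a : ∀ n : ℕ, Elliptic T (g ^ n * h * g ^ n * h⁻¹) := by
    intro n
    refine ⟨h • w₀, ?_⟩
    have hc := claim n w₀ hw₀ax
    calc (g ^ n * h * g ^ n * h⁻¹) • (h • w₀)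
        = (g ^ n) • (h • ((g ^ n) • (h⁻¹ • (h • w₀)))) := by
          simp only [mul_smul]
      _ = (g ^ n) • (h • ((g ^ n) • w₀)) := by rw [inv_smul_smul]
      _ = (g ^ n) • ((g ^ n)⁻¹ • (h • w₀)) := by rw [hc]
      _ = h • w₀ := smul_inv_smul _ _
  -- now the algebraic part
  apply SclAux.eq_zero_of_le_two_div
  intro n
  set a : G := g ^ (n : ℕ) * h * g ^ (n : ℕ) * h⁻¹ with ha
  set c : G := ⁅h, (g ^ (n : ℕ))⁻¹⁆ with hc
  have hac : a * c = g ^ (2 * (n : ℕ)) := by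
    rw [ha, hc, commutatorElement_def, two_mul, pow_add]
    group
  have sa : scl a = 0 := hell a (hell_a (n : ℕ))
  obtain ⟨m, hm⟩ := SclAux.exists_pow_cl_le sa
  obtain ⟨m', hm'⟩ : ∃ m', (m : ℕ) = m' + 1 :=
    ⟨(m : ℕ) - 1, (Nat.succ_pred_eq_of_pos m.2).symm⟩
  obtain ⟨d, hd, hdecomp⟩ := SclAux.key_decomp a c m'
  -- commutator length of aᵐ
  have hclam_ne : cl (a ^ (m : ℕ)) ≠ ⊤ := by
    intro htop
    rw [htop] at hm
    exact (by simp : ¬ ((⊤:ℝ≥0∞) ≤ ((m : ℕ) : ℝ≥0∞))) hm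
  obtain ⟨k, hk, hkeq⟩ := SclAux.cl_exists hclam_ne
  have hkm : k ≤ (m : ℕ) := by
    rw [hkeq] at hm
    exact_mod_cast hm
  -- the decomposition of g ^ (2 n m)
  set N : ℕ+ := 2 * n * m with hN
  have hNn : (N : ℕ) = 2 * (n : ℕ) * (m : ℕ) := by
    rw [hN]; push_cast; ring
  have hgN : g ^ (N : ℕ) = a ^ (m : ℕ) * d * c ^ (m : ℕ) := by
    rw [hNn, pow_mul, ← hac, hm']
    exact hdecomp
  have hPC : SclAux.PC (g ^ (N : ℕ)) (k + m' + (m : ℕ)) := by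
    rw [hgN]
    refine (hk.mul hd).mul ?_
    rw [hc]
    exact SclAux.PC.pow_comm h (g ^ (n : ℕ))⁻¹ (m : ℕ)
  have hclN : cl (g ^ (N : ℕ)) ≤ ((3 * (m : ℕ) : ℕ) : ℝ≥0∞) := by
    refine (SclAux.cl_le hPC).trans ?_
    have : k + m' + (m : ℕ) ≤ 3 * (m : ℕ) := by omega
    exact_mod_cast Nat.cast_le.2 this
  have hstep1 : scl g ≤ cl (g ^ (N : ℕ)) / ((N : ℕ) : ℝ≥0∞) := SclAux.scl_le_cl g N
  have hstep2 : cl (g ^ (N : ℕ)) / ((N : ℕ) : ℝ≥0∞) ≤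
      ((3 * (m : ℕ) : ℕ) : ℝ≥0∞) / ((N : ℕ) : ℝ≥0∞) :=
    ENNReal.div_le_div_right hclN _
  have hstep3 : ((3 * (m : ℕ) : ℕ) : ℝ≥0∞) / ((N : ℕ) : ℝ≥0∞) ≤ 2 / ((n : ℕ) : ℝ≥0∞) := by
    have hm0 : ((m : ℕ) : ℝ≥0∞) ≠ 0 := by exact_mod_cast m.ne_zero
    have hmt : ((m : ℕ) : ℝ≥0∞) ≠ ⊤ := by simp
    have h2n0 : ((2 : ℝ≥0∞)) ≠ 0 := by norm_num
    have h2nt : ((2 : ℝ≥0∞)) ≠ ⊤ := by norm_num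
    have e1 : ((3 * (m : ℕ) : ℕ) : ℝ≥0∞) / ((N : ℕ) : ℝ≥0∞)
        = 3 / (2 * ((n : ℕ) : ℝ≥0∞)) := by
      rw [hNn]
      push_cast
      rw [show (2 : ℝ≥0∞) * ((n : ℕ) : ℝ≥0∞) * ((m : ℕ) : ℝ≥0∞)
            = (2 * ((n : ℕ) : ℝ≥0∞)) * ((m : ℕ) : ℝ≥0∞) from by ring]
      exact ENNReal.mul_div_mul_right 3 (2 * ((n : ℕ) : ℝ≥0∞)) hm0 hmt
    have e2 : (2 : ℝ≥0∞) / ((n : ℕ) : ℝ≥0∞) = 4 / (2 * ((n : ℕ) : ℝ≥0∞)) := by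
      rw [show (4 : ℝ≥0∞) = 2 * 2 from by norm_num]
      exact (ENNReal.mul_div_mul_left 2 (((n : ℕ)) : ℝ≥0∞) h2n0 h2nt).symm
    rw [e1, e2]
    exact ENNReal.div_le_div_right (by norm_num) _
  exact hstep1.trans (hstep2.trans hstep3)
end

section
/- Let G be a group, g, a₁, …, aₖ ∈ G, and n ≠ 0. Suppose there is an identity expressing that some product of conjugates of powers of g of total exponent n times a product of the aᵢ lies in the commutator subgroup, realized by a surface S of Euler characteristic χ(S) with boundary components mapping to a₁,…,aₖ and to powers of g of total degree n. Then scl(g) ≤ −χ(S)/(2n) + (1/n)·Σᵢ scl(aᵢ). -/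
open scoped ENNReal
open scoped commutatorElement

namespace SclFill

variable {G : Type*} [Group G]

/-- List version of `IsProdCommutators`. -/
def IPC (x : G) (s : ℕ) : Prop :=
  ∃ l : List (G × G), l.length = s ∧ x = (l.map fun p => ⁅p.1, p.2⁆).prod

theorem ipc_iff {x : G} {s : ℕ} : IsProdCommutators x s ↔ IPC x s := by
  constructor
  · rintro ⟨a, b, rfl⟩
    refine ⟨List.ofFn (fun i => (a i, b i)), by simp, ?_⟩
    rw [List.map_ofFn]
    rfl
  · rintro ⟨l, rfl, rfl⟩
    refine ⟨fun i => (l.get i).1, fun i => (l.get i).2, ?_⟩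
    congr 1
    rw [show (fun i => ⁅(fun i => (l.get i).1) i, (fun i => (l.get i).2) i⁆)
        = (fun p : G × G => ⁅p.1, p.2⁆) ∘ l.get from rfl, ← List.map_ofFn, List.ofFn_get]

theorem IPC.of_eq {x y : G} {s : ℕ} (h : IPC x s) (hxy : x = y) : IPC y s := hxy ▸ h

theorem ipc_one : IPC (1 : G) 0 := ⟨[], rfl, rfl⟩

theorem ipc_comm (a b : G) : IPC ⁅a, b⁆ 1 := ⟨[(a,b)], rfl, by simp⟩

theorem IPC.mul {x y : G} {s t : ℕ} (hx : IPC x s) (hy : IPC y t) : IPC (x * y) (s + t) := by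
  obtain ⟨l, hl, rfl⟩ := hx; obtain ⟨l', hl', rfl⟩ := hy
  exact ⟨l ++ l', by simp [hl, hl'], by simp⟩

private theorem conj_aux (t : G) : ∀ l : List (G × G),
    t * (l.map fun p => ⁅p.1, p.2⁆).prod * t⁻¹
      = ((l.map fun p => (t * p.1 * t⁻¹, t * p.2 * t⁻¹)).map fun p => ⁅p.1, p.2⁆).prod := by
  intro l
  induction l with
  | nil => simp
  | cons p l ih =>
    simp only [List.map_cons, List.prod_cons]
    rw [show t * (⁅p.1, p.2⁆ * (l.map fun p => ⁅p.1, p.2⁆).prod) * t⁻¹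
        = (t * ⁅p.1, p.2⁆ * t⁻¹) * (t * (l.map fun p => ⁅p.1, p.2⁆).prod * t⁻¹) by group, ih]
    congr 1
    simp only [commutatorElement_def]
    group

theorem IPC.conj {x : G} {s : ℕ} (t : G) (hx : IPC x s) : IPC (t * x * t⁻¹) s := by
  obtain ⟨l, hl, rfl⟩ := hx
  exact ⟨l.map fun p => (t * p.1 * t⁻¹, t * p.2 * t⁻¹), by simp [hl], conj_aux t l⟩

private theorem inv_aux : ∀ l : List (G × G),
    ((l.map fun p => ⁅p.1, p.2⁆).prod)⁻¹
      = (((l.map fun p => (p.2, p.1)).reverse).map fun p => ⁅p.1, p.2⁆).prod := by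
  intro l
  induction l with
  | nil => simp
  | cons p l ih =>
    simp only [List.map_cons, List.prod_cons, List.reverse_cons, mul_inv_rev, ih,
      List.map_append, List.prod_append]
    simp [commutatorElement_inv]

theorem IPC.inv {x : G} {s : ℕ} (hx : IPC x s) : IPC x⁻¹ s := by
  obtain ⟨l, hl, rfl⟩ := hx
  exact ⟨(l.map fun p => (p.2, p.1)).reverse, by simp [hl], inv_aux l⟩

theorem IPC.succ {x : G} {s : ℕ} (hx : IPC x s) : IPC x (s + 1) :=
  (hx.mul (ipc_comm 1 1)).of_eq (by simp)

theorem IPC.mono {x : G} {s t : ℕ} (hx : IPC x s) (hst : s ≤ t) : IPC x t := by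
  induction t with
  | zero => exact (Nat.le_zero.mp hst) ▸ hx
  | succ t ih =>
    rcases Nat.lt_or_ge s (t+1) with h | h
    · exact (ih (Nat.lt_succ_iff.mp h)).succ
    · exact (le_antisymm hst h) ▸ hx

theorem IPC.pow {x : G} {s : ℕ} (hx : IPC x s) (t : ℕ) : IPC (x ^ t) (t * s) := by
  induction t with
  | zero => simpa using ipc_one
  | succ t ih =>
    exact ((ih.mul hx).of_eq (by rw [pow_succ])).mono (by simp [Nat.succ_mul])

/-- The pants lemma: `xᵐ yᵐ ((xy)ᵐ)⁻¹` is a product of `m/2 + 1` commutators. -/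
theorem pants (x y : G) : ∀ m : ℕ, IPC (x^m * y^m * ((x*y)^m)⁻¹) (m/2 + 1)
  | 0 => by simpa using ipc_one.mono (by omega)
  | 1 => by
      have : x^1 * y^1 * ((x*y)^1)⁻¹ = 1 := by group
      exact (ipc_one.of_eq this.symm).mono (by omega)
  | (m+2) => by
      have key : x^(m+2) * y^(m+2) * ((x*y)^(m+2))⁻¹ =
          (x^2 * (x^m * y^m * ((x*y)^m)⁻¹) * (x^2)⁻¹) * ⁅x^2*(x*y)^m*x⁻¹, x*y*x⁻¹*x⁻¹⁆ := by
        rw [show (x*y)^(m+2) = (x*y) * (x*y)^m * (x*y) by rw [pow_succ, pow_succ']]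
        group
        rw [show ((-1:ℤ) - (m:ℤ)) = -(m:ℤ) + -1 by ring, zpow_add (x*y) (-(m:ℤ)) (-1),
          zpow_neg_one (x*y), mul_inv_rev]
        group
      have h1 := ((pants x y m).conj (x^2)).mul (ipc_comm (x^2*(x*y)^m*x⁻¹) (x*y*x⁻¹*x⁻¹))
      exact (h1.of_eq key.symm).mono (by omega)

/-- Chained pants. -/
theorem chain (m : ℕ) : ∀ l : List G,
    IPC ((l.map (· ^ m)).prod * ((l.prod) ^ m)⁻¹) ((l.length - 1) * (m/2 + 1))
  | [] => by simpa using ipc_one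
  | [V] => by simpa using ipc_one
  | (V :: W :: l) => by
      set l' := W :: l with hl'
      have hQ := chain m l'
      have hP := pants V l'.prod m
      have key : ((V :: l').map (· ^ m)).prod * (((V :: l').prod) ^ m)⁻¹
          = (V^m * ((l'.map (· ^ m)).prod * ((l'.prod) ^ m)⁻¹) * (V^m)⁻¹)
            * (V^m * (l'.prod)^m * ((V * l'.prod)^m)⁻¹) := by
        simp only [List.map_cons, List.prod_cons]
        group
      have h1 := ((hQ.conj (V^m)).mul hP).of_eq key.symm
      refine h1.mono ?_
      simp only [hl', List.length_cons, Nat.add_sub_cancel]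
      rw [Nat.succ_mul]


theorem torus (x y : G) (m : ℕ) : IPC (⁅x,y⁆^m) (m/2 + 2) := by
  have hP := (pants (x*y*x⁻¹) y⁻¹ m).inv
  have h := hP.mul (ipc_comm x (y^m))
  refine (h.of_eq ?_).mono (by omega)
  simp only [commutatorElement_def, conj_pow, inv_pow]
  group

theorem genus (m : ℕ) : ∀ lP : List (G × G), lP ≠ [] →
    IPC (((lP.map fun p => ⁅p.1, p.2⁆).prod)^m) (m/2 + 2 + (lP.length - 1)*(m+3))
  | [], h => absurd rfl h
  | [p], _ => by simpa using torus p.1 p.2 m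
  | (p :: q :: l), _ => by
      have key : ∀ A R : G, (A^m * R^m * ((A*R)^m)⁻¹)⁻¹ * A^m * R^m = (A*R)^m := by
        intro A R; group
      have hP := (pants ⁅p.1, p.2⁆ ((q :: l).map fun p => ⁅p.1, p.2⁆).prod m).inv
      have hg := genus m (q :: l) (by simp)
      have h := (hP.mul (torus p.1 p.2 m)).mul hg
      refine (h.of_eq ?_).mono ?_
      · conv_rhs => rw [List.map_cons, List.prod_cons]
        exact key _ _
      · simp only [List.length_cons, Nat.add_sub_cancel]
        rw [Nat.succ_mul]
        generalize l.length * (m+3) = L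
        omega

theorem merge (g : G) : ∀ l : List (G × ℤ), ∃ Cw : G, IPC Cw l.length ∧
    (l.map fun p => p.1 * g ^ p.2 * (p.1)⁻¹).prod = Cw * g ^ ((l.map Prod.snd).sum)
  | [] => ⟨1, ipc_one, by simp⟩
  | (p :: l) => by
      obtain ⟨Cw, h1, h2⟩ := merge g l
      refine ⟨((p.1 * g^p.2 * p.1⁻¹) * Cw * (p.1 * g^p.2 * p.1⁻¹)⁻¹) * ⁅p.1, g^p.2⁆,
        ((h1.conj _).mul (ipc_comm _ _)).mono (by simp), ?_⟩
      simp only [List.map_cons, List.prod_cons, List.sum_cons, h2, zpow_add]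
      group

theorem ipc_prod_ofFn : ∀ {κ : ℕ} (f : Fin κ → G) (t : Fin κ → ℕ),
    (∀ i, IPC (f i) (t i)) → IPC ((List.ofFn f).prod) (∑ i, t i)
  | 0, f, t, _ => by simpa using ipc_one
  | (κ+1), f, t, h => by
      have := (h 0).mul (ipc_prod_ofFn (fun i => f i.succ) (fun i => t i.succ) (fun i => h i.succ))
      refine this.of_eq ?_ |>.mono (by rw [Fin.sum_univ_succ])
      rw [List.ofFn_succ, List.prod_cons]

/-- The covering bound: from the surface relation, the `m`-th powers of all boundary words
multiply (in conjugated form) to a product of roughly `m·(2hg + k + j − 2)/2` commutators. -/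
theorem cover (g : G) {k j hg : ℕ} (a c' : Fin k → G) (d : Fin j → G) (e : Fin j → ℤ)
    (hjk : 2 ≤ 2*hg + (k + j)) (hjk1 : 1 ≤ k + j)
    (hrel : IPC ((List.ofFn fun i => d i * g^(e i) * (d i)⁻¹).prod *
      (List.ofFn fun i => c' i * a i * (c' i)⁻¹).prod) hg) (m : ℕ) :
    ∃ T, IPC ((List.ofFn fun i => d i * g^(e i * (m:ℤ)) * (d i)⁻¹).prod *
        (List.ofFn fun i => c' i * (a i)^m * (c' i)⁻¹).prod) T ∧
      2*T + 2*m ≤ m*(2*hg + (k+j)) + (2*(k+j) + 8*hg + 8) := by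
  classical
  set lV : List G := (List.ofFn fun i => d i * g^(e i) * (d i)⁻¹) ++
      (List.ofFn fun i => c' i * a i * (c' i)⁻¹) with hlV
  have hlen : lV.length = j + k := by simp [hlV]
  have hmap : ((lV.map (· ^ m)).prod) =
      (List.ofFn fun i => d i * g^(e i * (m:ℤ)) * (d i)⁻¹).prod *
        (List.ofFn fun i => c' i * (a i)^m * (c' i)⁻¹).prod := by
    have hz : ∀ (q : ℤ), (g^q)^m = g^(q*(m:ℤ)) := fun q => by
      rw [← zpow_natCast (g^q), ← zpow_mul]
    simp only [hlV, List.map_append, List.map_ofFn, List.prod_append]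
    rw [show ((fun x : G => x^m) ∘ fun i => d i * g^(e i) * (d i)⁻¹)
          = fun i => d i * g^(e i * (m:ℤ)) * (d i)⁻¹ from funext fun i => by
        simp only [Function.comp_apply, conj_pow, hz],
      show ((fun x : G => x^m) ∘ fun i => c' i * a i * (c' i)⁻¹)
          = fun i => c' i * (a i)^m * (c' i)⁻¹ from funext fun i => by
        simp only [Function.comp_apply, conj_pow]]
  obtain ⟨lP, hlP, hP⟩ := hrel
  have hhalf : ∀ (B : ℕ), 2*(B*(m/2+1)) ≤ B*m + 2*B := by
    intro B
    have h2 : 2*(m/2) ≤ m := by omega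
    calc 2*(B*(m/2+1)) = B*(2*(m/2)) + 2*B := by ring
      _ ≤ B*m + 2*B := by
          have := Nat.mul_le_mul_left B h2; omega
  rcases Nat.eq_zero_or_pos hg with hg0 | hgpos
  · -- genus 0 : drop the last boundary word
    subst hg0
    have hPne : lV.prod = 1 := by
      rw [hlV, List.prod_append, hP, List.length_eq_zero_iff.mp hlP]; simp
    have hne : lV ≠ [] := by
      intro h; rw [h] at hlen; simp at hlen; omega
    have hsplit : lV.dropLast ++ [lV.getLast hne] = lV := List.dropLast_append_getLast hne
    have hVprod : lV.dropLast.prod * lV.getLast hne = 1 := by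
      have := congrArg List.prod hsplit
      rw [List.prod_append, List.prod_singleton] at this
      rw [this, hPne]
    have hinv : ((lV.dropLast.prod)^m)⁻¹ = (lV.getLast hne)^m := by
      rw [mul_eq_one_iff_eq_inv.mp hVprod, inv_pow, inv_inv]
    have hch := chain m lV.dropLast
    rw [hinv] at hch
    refine ⟨(lV.dropLast.length - 1)*(m/2+1), hch.of_eq ?_, ?_⟩
    · rw [← hmap]
      conv_rhs => rw [← hsplit]
      rw [List.map_append, List.prod_append]
      simp
    · have hlen' : lV.dropLast.length = j + k - 1 := by rw [List.length_dropLast, hlen]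
      rw [hlen']
      have h1 := hhalf (j + k - 1 - 1)
      rw [show m*(2*0+(k+j)) = (j+k-1-1)*m + 2*m from by
        rw [show 2*0+(k+j) = (j+k-1-1)+2 from by omega, Nat.mul_add, Nat.mul_comm]; ring]
      omega
  · -- positive genus
    have hPne : lP ≠ [] := by
      intro h; rw [h] at hlP; simp at hlP; omega
    have hch := chain m lV
    have hprodP : lV.prod = (lP.map fun p => ⁅p.1, p.2⁆).prod := by
      rw [hlV, List.prod_append]; exact hP
    rw [hprodP] at hch
    have hgen := genus m lP hPne
    refine ⟨(lV.length - 1)*(m/2+1) + (m/2 + 2 + (lP.length - 1)*(m+3)),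
      (hch.mul hgen).of_eq ?_, ?_⟩
    · rw [inv_mul_cancel_right, hmap]
    · rw [hlen, hlP]
      calc 2*((j+k-1)*(m/2+1) + (m/2 + 2 + (hg-1)*(m+3))) + 2*m
          = 2*((j+k-1)*(m/2+1)) + 2*(m/2) + 2*((hg-1)*(m+3)) + 2*m + 4 := by ring
        _ ≤ ((j+k-1)*m + 2*(j+k-1)) + m + ((hg-1)*(2*m) + (hg-1)*6) + 2*m + 4 := by
            have c1 := hhalf (j+k-1)
            have c2 : 2*(m/2) ≤ m := by omega
            have c3 : 2*((hg-1)*(m+3)) = (hg-1)*(2*m) + (hg-1)*6 := by ring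
            omega
        _ ≤ m*(2*hg+(k+j)) + (2*(k+j)+8*hg+8) := by
            have c4 : (j+k-1)*m + m + ((hg-1)*(2*m) + 2*m) = m*(2*hg+(k+j)) := by
              rw [show (j+k-1)*m + m + ((hg-1)*(2*m) + 2*m)
                    = ((j+k-1) + 1 + (2*(hg-1) + 2))*m from by ring,
                show (j+k-1) + 1 + (2*(hg-1)+2) = 2*hg + (k+j) from by omega, Nat.mul_comm]
            have c5 : 2*(j+k-1) ≤ 2*(k+j) := by omega
            have c6 : (hg-1)*6 ≤ 6*hg := by omega
            omega

/-- Central combinatorial bound: `g^(nm)` is a product of `T + Σ tᵢ` commutators,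
where `2T + 2m ≤ m(2hg + k + j) + O(1)` and `tᵢ` bounds the commutator length of `aᵢ^m`. -/
theorem central (g : G) {k j hg : ℕ} (a c' : Fin k → G) (d : Fin j → G) (e : Fin j → ℤ)
    (n : ℤ) (hsum : (∑ i, e i) = n)
    (hjk : 2 ≤ 2*hg + (k + j)) (hj1 : 1 ≤ j)
    (hrel : IPC ((List.ofFn fun i => d i * g^(e i) * (d i)⁻¹).prod *
      (List.ofFn fun i => c' i * a i * (c' i)⁻¹).prod) hg)
    (m : ℕ) (t : Fin k → ℕ) (ht : ∀ i, IPC ((a i)^m) (t i)) :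
    ∃ T, IPC (g^(n * (m:ℤ))) (T + ∑ i, t i) ∧
      2*T + 2*m ≤ m*(2*hg + (k+j)) + (2*(k+j) + 8*hg + 8 + 2*j) := by
  obtain ⟨T₀, hT₀, hT₀b⟩ := cover g a c' d e hjk (by omega) hrel m
  obtain ⟨Cw, hCw, hCeq⟩ := merge g (List.ofFn fun i => (d i, e i * (m:ℤ)))
  have hmapCw : ((List.ofFn fun i => (d i, e i * (m:ℤ))).map
      fun p => p.1 * g ^ p.2 * (p.1)⁻¹) = List.ofFn fun i => d i * g^(e i * (m:ℤ)) * (d i)⁻¹ := by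
    rw [List.map_ofFn]; rfl
  have hsumCw : (((List.ofFn fun i => (d i, e i * (m:ℤ))).map Prod.snd).sum) = n * (m:ℤ) := by
    rw [List.map_ofFn]
    rw [show (Prod.snd ∘ fun i => (d i, e i * (m:ℤ))) = fun i => e i * (m:ℤ) from rfl]
    rw [List.sum_ofFn, ← Finset.sum_mul, hsum]
  rw [hmapCw, hsumCw] at hCeq
  have hCwlen : IPC Cw j := by
    have : (List.ofFn fun i => (d i, e i * (m:ℤ))).length = j := by simp
    exact this ▸ hCw
  -- g^(nm) * Am is a product of (j + T₀) commutators
  set Am := (List.ofFn fun i => c' i * (a i)^m * (c' i)⁻¹).prod with hAm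
  have h1 : IPC (g^(n*(m:ℤ)) * Am) (j + T₀) := by
    have := hCwlen.inv.mul hT₀
    refine this.of_eq ?_
    rw [hCeq]
    group
  have h2 : IPC Am (∑ i, t i) := by
    rw [hAm]
    exact ipc_prod_ofFn _ _ fun i => (ht i).conj (c' i)
  have h3 : IPC (g^(n*(m:ℤ))) ((j + T₀) + ∑ i, t i) :=
    (h1.mul h2.inv).of_eq (mul_inv_cancel_right _ _)
  exact ⟨j + T₀, h3, by omega⟩


/-! ### Analytic part -/

open scoped NNReal

theorem ipcP_inv {x : G} {s : ℕ} (h : IsProdCommutators x s) : IsProdCommutators x⁻¹ s :=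
  ipc_iff.mpr (ipc_iff.mp h).inv

theorem cl_le {g : G} {s : ℕ} (h : IsProdCommutators g s) : cl g ≤ s :=
  sInf_le ⟨s, h, rfl⟩

theorem cl_inv (x : G) : cl x⁻¹ = cl x := by
  have key : ∀ y : G, cl y ≤ cl y⁻¹ := by
    intro y
    apply sInf_le_sInf
    rintro _ ⟨s, hs, rfl⟩
    exact ⟨s, by simpa using ipcP_inv hs, rfl⟩
  exact le_antisymm (by simpa using key x⁻¹) (key x)

theorem scl_le_div (g : G) (N : ℕ+) : scl g ≤ cl (g ^ (N:ℕ)) / ((N:ℕ+) : ℝ≥0∞) :=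
  iInf_le _ N

theorem scl_inv (g : G) : scl g⁻¹ = scl g := by
  unfold scl
  refine iInf_congr fun N => ?_
  rw [inv_pow, cl_inv]

theorem exists_good_power {x : G} (hfin : scl x ≠ ⊤) {δ : ℝ≥0∞} (hδ : 0 < δ) :
    ∃ (N : ℕ+) (s : ℕ), IsProdCommutators (x ^ (N:ℕ)) s ∧
      (s : ℝ≥0∞) ≤ ((N:ℕ) : ℝ≥0∞) * (scl x + δ) := by
  have h1 : scl x < scl x + δ := ENNReal.lt_add_right hfin hδ.ne'
  conv_lhs at h1 => rw [scl]
  obtain ⟨N, hN⟩ := iInf_lt_iff.mp h1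
  have hcoe : ((N:ℕ+) : ℝ≥0∞) = ((N:ℕ) : ℝ≥0∞) := by norm_cast
  rw [hcoe] at hN
  have h2 : cl (x^(N:ℕ)) < (scl x + δ) * ((N:ℕ) : ℝ≥0∞) :=
    (ENNReal.div_lt_iff (Or.inl (by exact_mod_cast N.pos.ne'))
      (Or.inl (by simp))).mp hN
  obtain ⟨y, ⟨s, hs, rfl⟩, hy⟩ := sInf_lt_iff.mp h2
  exact ⟨N, s, hs, by rw [mul_comm]; exact hy.le⟩

theorem main_pos (g : G) (k j : ℕ) (a : Fin k → G)
    (hg : ℕ) (n : ℤ) (hn : 0 < n)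
    (hχ : (2 : ℤ) - 2 * hg - (k + j) ≤ 0)
    (hsurf : ∃ (c : Fin k → G) (d : Fin j → G) (e : Fin j → ℤ),
      (∑ i, e i) = n ∧
      IsProdCommutators
        ((List.ofFn (fun i => d i * g ^ (e i) * (d i)⁻¹)).prod *
          (List.ofFn (fun i => c i * a i * (c i)⁻¹)).prod) hg) :
    scl g ≤ ENNReal.ofReal ((2 * hg + (k + j) - 2 : ℝ) / (2 * |(n : ℝ)|)) +
      (1 / (n.natAbs : ℝ≥0∞)) * ∑ i, scl (a i) := by
  classical
  obtain ⟨c', d, e, hsum, hrel0⟩ := hsurf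
  have hrel := ipc_iff.mp hrel0
  have hjk : 2 ≤ 2*hg + (k + j) := by omega
  have hj1 : 1 ≤ j := by
    rcases Nat.eq_zero_or_pos j with h0 | h
    · subst h0; simp at hsum; omega
    · exact h
  set n' : ℕ := n.natAbs with hn'def
  have hnn : n = (n' : ℤ) := by rw [hn'def, Int.natAbs_of_nonneg hn.le]
  have hn'1 : 1 ≤ n' := by omega
  set D : ℕ := 2*hg + (k + j) - 2 with hDdef
  have hD : 2*hg + (k + j) = D + 2 := by omega
  set S : ℝ≥0∞ := ∑ i, scl (a i) with hSdef
  have habs : |(n:ℝ)| = (n' : ℝ) := by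
    rw [hnn]; push_cast; exact abs_of_nonneg (by positivity)
  have hterm1 : ENNReal.ofReal ((2 * hg + (k + j) - 2 : ℝ) / (2 * |(n : ℝ)|))
      = (D : ℝ≥0∞) / ((2*n' : ℕ) : ℝ≥0∞) := by
    rw [habs,
      show (2 * (hg:ℝ) + ((k:ℝ) + (j:ℝ)) - 2 : ℝ) = ((D:ℕ) : ℝ) from by
        rw [hDdef]; push_cast [Nat.cast_sub hjk]; ring,
      show (2 * (n':ℝ) : ℝ) = ((2*n' : ℕ) : ℝ) from by push_cast; ring,
      ENNReal.ofReal_div_of_pos (by positivity), ENNReal.ofReal_natCast,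
      ENNReal.ofReal_natCast]
  rw [hterm1]
  by_cases htop : ∃ i, scl (a i) = ⊤
  · obtain ⟨i₀, hi₀⟩ := htop
    have hS : S = ⊤ := ENNReal.sum_eq_top.mpr ⟨i₀, Finset.mem_univ _, hi₀⟩
    rw [hS, ENNReal.mul_top (by
      rw [one_div]
      exact ENNReal.inv_ne_zero.mpr (by simp))]
    simp
  · push_neg at htop
    apply ENNReal.le_of_forall_pos_le_add
    intro ε hε _
    set δ : ℝ≥0∞ := (ε : ℝ≥0∞) / (2*((k:ℝ≥0∞)+1)) with hδdef
    have hδpos : 0 < δ := ENNReal.div_pos (by exact_mod_cast hε.ne') (by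
      refine ENNReal.mul_ne_top (by simp) ?_
      simp)
    choose N s hIPC hle using fun i => exists_good_power (htop i) hδpos
    set CC : ℕ := 2*(k+j) + 8*hg + 8 + 2*j with hCCdef
    set L : ℕ := ∏ i, (N i : ℕ) with hLdef
    have hLpos : 0 < L := Finset.prod_pos (fun i _ => (N i).pos)
    obtain ⟨r, hrpos, hCCr⟩ : ∃ r : ℕ, 0 < r ∧ (CC : ℝ≥0∞) ≤ (r : ℝ≥0∞) * (ε : ℝ≥0∞) := by
      refine ⟨⌈(CC : ℝ≥0) / ε⌉₊ + 1, Nat.succ_pos _, ?_⟩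
      have h1 : (CC : ℝ≥0) / ε ≤ ((⌈(CC : ℝ≥0) / ε⌉₊ + 1 : ℕ) : ℝ≥0) := by
        push_cast
        exact le_trans (Nat.le_ceil _) (by norm_num)
      have h2 : (CC : ℝ≥0) ≤ ((⌈(CC : ℝ≥0) / ε⌉₊ + 1 : ℕ) : ℝ≥0) * ε := by
        rw [div_le_iff₀ hε] at h1
        exact h1
      exact_mod_cast ENNReal.coe_le_coe.mpr h2
    set M : ℕ := L * r with hMdef
    have hMpos : 0 < M := Nat.mul_pos hLpos hrpos
    set m : ℕ := 2 * M with hmdef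
    have hmpos : 0 < m := by omega
    have hNdvd : ∀ i, (N i : ℕ) ∣ m := by
      intro i
      have h1 : (N i : ℕ) ∣ L := Finset.dvd_prod_of_mem _ (Finset.mem_univ i)
      exact Dvd.dvd.mul_left (h1.mul_right r) 2
    set t : Fin k → ℕ := fun i => (m / (N i : ℕ)) * s i with htdef
    have ht : ∀ i, IPC ((a i)^m) (t i) := by
      intro i
      have h1 := (ipc_iff.mp (hIPC i)).pow (m / (N i : ℕ))
      refine h1.of_eq ?_
      rw [← pow_mul, Nat.mul_div_cancel' (hNdvd i)]
    obtain ⟨T, hT, hTb⟩ := central g a c' d e n hsum hjk hj1 hrel m t ht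
    have hTle : T ≤ M * D + CC := by
      have e1 : m*(2*hg+(k+j)) = 2*(M*D) + 2*m := by rw [hD, hmdef]; ring
      omega
    have hpoweq : g ^ (n * (m:ℤ)) = g ^ ((n' * m : ℕ)) := by
      rw [hnn, ← zpow_natCast g (n'*m)]
      norm_cast
    have hcl : cl (g ^ ((n' * m : ℕ))) ≤ ((T + ∑ i, t i : ℕ) : ℝ≥0∞) :=
      cl_le (ipc_iff.mpr (hT.of_eq hpoweq))
    set K : ℕ+ := ⟨n' * m, by positivity⟩ with hKdef
    have hscl := scl_le_div g K
    have hKcoe : ((K:ℕ+) : ℝ≥0∞) = ((n' * m : ℕ) : ℝ≥0∞) := by norm_cast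
    have hKpow : (K : ℕ) = n' * m := rfl
    rw [hKcoe, hKpow] at hscl
    refine le_trans hscl (ENNReal.div_le_of_le_mul (le_trans hcl ?_))
    have hm' : ((n' * m : ℕ) : ℝ≥0∞) = ((2*n' : ℕ) : ℝ≥0∞) * (M : ℝ≥0∞) := by
      rw [hmdef]
      push_cast
      ring
    have h2n0 : ((2*n' : ℕ) : ℝ≥0∞) ≠ 0 := by
      simp only [ne_eq, Nat.cast_eq_zero]; omega
    have h2nt : ((2*n' : ℕ) : ℝ≥0∞) ≠ ⊤ := ENNReal.natCast_ne_top _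
    have hn0 : ((n' : ℕ) : ℝ≥0∞) ≠ 0 := by
      simp only [ne_eq, Nat.cast_eq_zero]; omega
    have hnt : ((n' : ℕ) : ℝ≥0∞) ≠ ⊤ := ENNReal.natCast_ne_top _
    have hexp : ((D : ℝ≥0∞) / ((2*n' : ℕ) : ℝ≥0∞) + (1 / (n' : ℝ≥0∞)) * S + (ε:ℝ≥0∞))
          * ((n' * m : ℕ) : ℝ≥0∞)
        = (D : ℝ≥0∞) * (M : ℝ≥0∞) + S * (m : ℝ≥0∞)
          + (ε:ℝ≥0∞) * ((n' * m : ℕ) : ℝ≥0∞) := by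
      rw [add_mul, add_mul]
      congr 1
      congr 1
      · rw [hm', ← mul_assoc, ENNReal.div_mul_cancel h2n0 h2nt]
      · rw [show ((n' * m : ℕ) : ℝ≥0∞) = ((n':ℕ) : ℝ≥0∞) * ((m:ℕ) : ℝ≥0∞) from by
            push_cast; ring]
        rw [mul_comm ((1 : ℝ≥0∞) / _) S, mul_assoc, ← mul_assoc (1 / _), one_div,
          ENNReal.inv_mul_cancel hn0 hnt, one_mul]
    rw [hexp]
    have hTcast : ((T : ℕ) : ℝ≥0∞) ≤ (D : ℝ≥0∞) * (M : ℝ≥0∞) + (CC : ℝ≥0∞) := by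
      calc ((T : ℕ) : ℝ≥0∞) ≤ ((M * D + CC : ℕ) : ℝ≥0∞) := by exact_mod_cast hTle
        _ = (D : ℝ≥0∞) * (M : ℝ≥0∞) + (CC : ℝ≥0∞) := by push_cast; ring
    have htsum : ((∑ i, t i : ℕ) : ℝ≥0∞)
        ≤ S * (m : ℝ≥0∞) + (m : ℝ≥0∞) * ((k : ℝ≥0∞) * δ) := by
      have hti : ∀ i, ((t i : ℕ) : ℝ≥0∞) ≤ (m : ℝ≥0∞) * (scl (a i) + δ) := by
        intro i
        have h1 : ((t i : ℕ) : ℝ≥0∞) = ((m / (N i : ℕ) : ℕ) : ℝ≥0∞) * ((s i : ℕ) : ℝ≥0∞) := by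
          rw [htdef]; push_cast; ring
        rw [h1]
        calc ((m / (N i : ℕ) : ℕ) : ℝ≥0∞) * ((s i : ℕ) : ℝ≥0∞)
            ≤ ((m / (N i : ℕ) : ℕ) : ℝ≥0∞) * (((N i : ℕ) : ℝ≥0∞) * (scl (a i) + δ)) :=
              mul_le_mul_right (hle i) _
          _ = (m : ℝ≥0∞) * (scl (a i) + δ) := by
              rw [← mul_assoc]
              congr 1
              rw [show ((m / (N i : ℕ) : ℕ) : ℝ≥0∞) * ((N i : ℕ) : ℝ≥0∞)
                  = ((m / (N i : ℕ) * (N i : ℕ) : ℕ) : ℝ≥0∞) from by push_cast; ring,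
                Nat.div_mul_cancel (hNdvd i)]
      calc ((∑ i, t i : ℕ) : ℝ≥0∞) = ∑ i, ((t i : ℕ) : ℝ≥0∞) := by push_cast; rfl
        _ ≤ ∑ i, (m : ℝ≥0∞) * (scl (a i) + δ) := Finset.sum_le_sum fun i _ => hti i
        _ = S * (m : ℝ≥0∞) + (m : ℝ≥0∞) * ((k : ℝ≥0∞) * δ) := by
            rw [← Finset.mul_sum, Finset.sum_add_distrib, Finset.sum_const,
              Finset.card_univ, Fintype.card_fin, ← hSdef, nsmul_eq_mul, mul_add,
              mul_comm (m : ℝ≥0∞) S, ← mul_assoc, mul_comm ((m:ℕ) : ℝ≥0∞) ((k:ℕ) : ℝ≥0∞),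
              mul_assoc]
    have hkδ : (k : ℝ≥0∞) * δ ≤ (ε : ℝ≥0∞) / 2 := by
      rw [hδdef]
      calc (k : ℝ≥0∞) * ((ε : ℝ≥0∞) / (2*((k:ℝ≥0∞)+1)))
          ≤ ((k:ℝ≥0∞)+1) * ((ε : ℝ≥0∞) / (2*((k:ℝ≥0∞)+1))) :=
            mul_le_mul_left le_self_add _
        _ = (ε : ℝ≥0∞) / 2 := by
            rw [show (2*((k:ℝ≥0∞)+1)) = ((k:ℝ≥0∞)+1)*2 from mul_comm _ _,
              ← mul_div_assoc, ENNReal.mul_div_mul_left _ _ (by simp) (by simp)]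
    have hMr : (CC : ℝ≥0∞) ≤ (M:ℝ≥0∞) * (ε : ℝ≥0∞) := by
      refine le_trans hCCr (mul_le_mul_left ?_ _)
      exact_mod_cast Nat.le_mul_of_pos_left r hLpos
    have hδm : (m : ℝ≥0∞) * ((k : ℝ≥0∞) * δ) ≤ (M:ℝ≥0∞) * (ε : ℝ≥0∞) := by
      calc (m : ℝ≥0∞) * ((k : ℝ≥0∞) * δ) ≤ (m : ℝ≥0∞) * ((ε:ℝ≥0∞)/2) :=
            mul_le_mul_right hkδ _
        _ = (M:ℝ≥0∞) * (ε : ℝ≥0∞) := by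
            rw [show ((m:ℕ) : ℝ≥0∞) = 2 * (M:ℝ≥0∞) from by rw [hmdef]; push_cast; ring,
              mul_comm 2 (M:ℝ≥0∞), mul_assoc,
              ENNReal.mul_div_cancel' (by simp) (by simp)]
    have hεbig : (M:ℝ≥0∞) * (ε:ℝ≥0∞) + (M:ℝ≥0∞) * (ε:ℝ≥0∞)
        ≤ (ε:ℝ≥0∞) * ((n' * m : ℕ) : ℝ≥0∞) := by
      have h1 : ((m : ℕ):ℝ≥0∞) ≤ ((n'*m : ℕ):ℝ≥0∞) := by
        exact_mod_cast Nat.le_mul_of_pos_left m (show 0 < n' by omega)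
      calc (M:ℝ≥0∞) * (ε:ℝ≥0∞) + (M:ℝ≥0∞) * (ε:ℝ≥0∞) = (ε:ℝ≥0∞) * ((m : ℕ):ℝ≥0∞) := by
            rw [show ((m:ℕ) : ℝ≥0∞) = 2 * (M:ℝ≥0∞) from by rw [hmdef]; push_cast; ring]
            ring
        _ ≤ (ε:ℝ≥0∞) * ((n'*m : ℕ):ℝ≥0∞) := mul_le_mul_right h1 _
    calc ((T + ∑ i, t i : ℕ) : ℝ≥0∞) = ((T : ℕ) : ℝ≥0∞) + ((∑ i, t i : ℕ) : ℝ≥0∞) := by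
          push_cast; rfl
      _ ≤ ((D : ℝ≥0∞) * (M : ℝ≥0∞) + (CC : ℝ≥0∞))
            + (S * (m : ℝ≥0∞) + (m : ℝ≥0∞) * ((k : ℝ≥0∞) * δ)) := add_le_add hTcast htsum
      _ = (D : ℝ≥0∞) * (M : ℝ≥0∞) + S * (m : ℝ≥0∞)
            + ((CC : ℝ≥0∞) + (m : ℝ≥0∞) * ((k : ℝ≥0∞) * δ)) := by ring
      _ ≤ (D : ℝ≥0∞) * (M : ℝ≥0∞) + S * (m : ℝ≥0∞)
            + ((M:ℝ≥0∞) * (ε:ℝ≥0∞) + (M:ℝ≥0∞) * (ε:ℝ≥0∞)) :=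
          add_le_add_right (add_le_add hMr hδm) _
      _ ≤ (D : ℝ≥0∞) * (M : ℝ≥0∞) + S * (m : ℝ≥0∞)
            + (ε:ℝ≥0∞) * ((n' * m : ℕ) : ℝ≥0∞) := add_le_add_right hεbig _

end SclFill

/-- Lemma (fill with zero): if there is a (connected, genus `hg`, non-disk) surface whose
boundary components map to `a₁, …, a_k` and to powers of `g` of total degree `n ≠ 0` —
algebraically, a product of conjugates of the `aᵢ` and of powers of `g` with exponents
summing to `n` is a product of `hg` commutators — then
`scl(g) ≤ −χ(S)/(2n) + (1/n) Σᵢ scl(aᵢ)`, where `χ(S) = 2 − 2·hg − (k + j)`. -/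
theorem scl_le_fill_with_zero {G : Type*} [Group G] (g : G) (k j : ℕ) (a : Fin k → G)
    (hg : ℕ) (n : ℤ) (hn : n ≠ 0)
    (hχ : (2 : ℤ) - 2 * hg - (k + j) ≤ 0)
    (hsurf : ∃ (c : Fin k → G) (d : Fin j → G) (e : Fin j → ℤ),
      (∑ i, e i) = n ∧
      IsProdCommutators
        ((List.ofFn (fun i => d i * g ^ (e i) * (d i)⁻¹)).prod *
          (List.ofFn (fun i => c i * a i * (c i)⁻¹)).prod) hg) :
    scl g ≤ ENNReal.ofReal ((2 * hg + (k + j) - 2 : ℝ) / (2 * |(n : ℝ)|)) +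
      (1 / (n.natAbs : ℝ≥0∞)) * ∑ i, scl (a i) := by
  rcases hn.lt_or_gt with hneg | hpos
  · obtain ⟨c', d, e, hsum, hrel⟩ := hsurf
    have hsurf' : ∃ (c : Fin k → G) (d : Fin j → G) (e : Fin j → ℤ),
        (∑ i, e i) = -n ∧
        IsProdCommutators
          ((List.ofFn (fun i => d i * (g⁻¹) ^ (e i) * (d i)⁻¹)).prod *
            (List.ofFn (fun i => c i * a i * (c i)⁻¹)).prod) hg := by
      refine ⟨c', d, fun i => -(e i), by rw [Finset.sum_neg_distrib, hsum], ?_⟩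
      rw [show (fun i => d i * (g⁻¹) ^ (-(e i)) * (d i)⁻¹)
          = fun i => d i * g ^ (e i) * (d i)⁻¹ from funext fun i => by
        rw [zpow_neg, inv_zpow, inv_inv]]
      exact hrel
    have h := SclFill.main_pos g⁻¹ k j a hg (-n) (by omega) hχ hsurf'
    rw [SclFill.scl_inv] at h
    have e1 : |((-n : ℤ) : ℝ)| = |(n : ℝ)| := by push_cast; exact abs_neg _
    have e2 : (-n).natAbs = n.natAbs := Int.natAbs_neg n
    rw [e1, e2] at h
    exact h
  · exact SclFill.main_pos g k j a hg n hpos hχ hsurf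
end

section
/- Let G act on a tree T, let g be hyperbolic, and suppose there is h ∈ G such that a translate hγ of a fundamental domain γ for g lies on the axis T_g with reversed orientation. Then the element ghgh⁻¹ fixes a point of T_g. -/
set_option linter.unusedVariables false

variable {V : Type*}

/-- In a tree, two points on the geodesic segment `[u,v]` at the same distance from `u`
coincide. -/
lemma tree_seg_unique {T : SimpleGraph V} (hT : T.IsTree) {u v w₁ w₂ : V}
    (hw₁ : T.dist u w₁ + T.dist w₁ v = T.dist u v)
    (hw₂ : T.dist u w₂ + T.dist w₂ v = T.dist u v)
    (heq : T.dist u w₁ = T.dist u w₂) : w₁ = w₂ := by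
  have hconn := hT.isConnected
  obtain ⟨p1, hp1⟩ := hconn.exists_walk_length_eq_dist u w₁
  obtain ⟨p2, hp2⟩ := hconn.exists_walk_length_eq_dist w₁ v
  obtain ⟨q1, hq1⟩ := hconn.exists_walk_length_eq_dist u w₂
  obtain ⟨q2, hq2⟩ := hconn.exists_walk_length_eq_dist w₂ v
  have hPlen : (p1.append p2).length = T.dist u v := by
    rw [SimpleGraph.Walk.length_append, hp1, hp2, hw₁]
  have hQlen : (q1.append q2).length = T.dist u v := by
    rw [SimpleGraph.Walk.length_append, hq1, hq2, hw₂]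
  have hP : (p1.append p2).IsPath := (p1.append p2).isPath_of_length_eq_dist hPlen
  have hQ : (q1.append q2).IsPath := (q1.append q2).isPath_of_length_eq_dist hQlen
  have hPQ : p1.append p2 = q1.append q2 := by
    have := hT.IsAcyclic.path_unique ⟨p1.append p2, hP⟩ ⟨q1.append q2, hQ⟩
    exact congrArg Subtype.val this
  have e1 : (p1.append p2).getVert p1.length = w₁ := by
    rw [SimpleGraph.Walk.getVert_append]; simp
  have e2 : (q1.append q2).getVert q1.length = w₂ := by
    rw [SimpleGraph.Walk.getVert_append]; simp
  have hl : p1.length = q1.length := by rw [hp1, hq1, heq]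
  rw [← e1, ← e2, hPQ, hl]

/-- A tree action is by isometries. -/
lemma dist_smul_eq {T : SimpleGraph V} {G : Type*} [Group G] [MulAction G V]
    (hT : IsTreeAction T G) (g : G) (u v : V) :
    T.dist (g • u) (g • v) = T.dist u v := by
  have key : ∀ (a : G) (u v : V), T.dist (a • u) (a • v) ≤ T.dist u v := by
    intro a u v
    obtain ⟨p, hp⟩ := hT.1.isConnected.exists_walk_length_eq_dist u v
    let f : T →g T := ⟨fun w => a • w, fun h => hT.2.1 a _ _ h⟩
    calc T.dist (a • u) (a • v) ≤ (p.map f).length := SimpleGraph.dist_le _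
      _ = T.dist u v := by rw [SimpleGraph.Walk.length_map, hp]
  refine le_antisymm (key g u v) ?_
  have := key g⁻¹ (g • u) (g • v)
  simpa using this

/-- If `g` is hyperbolic and a translate `hγ` of a fundamental domain
`γ = [x, g•x] ⊆ T_g` lies on the axis `T_g` with reversed orientation, then `g h g h⁻¹`
fixes a point of `T_g`. -/
theorem product_fixes_point_of_reversed_fundamental_domain {V : Type*} (T : SimpleGraph V)
    {G : Type*} [Group G] [MulAction G V] (hT : IsTreeAction T G)
    (g : G) (hg : ¬ Elliptic T g) (x : V) (hx : x ∈ Axis T g) (h : G)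
    (h1 : h • x ∈ Axis T g) (h2 : h • (g • x) ∈ Axis T g)
    (hrev : Ahead T g (h • (g • x)) (h • x)) :
    ∃ v ∈ Axis T g, (g * h * g * h⁻¹) • v = v := by
  set ℓ := transLen T g with hℓ
  set p := h • (g • x) with hp
  set q := h • x with hq
  have dp : T.dist p (g • p) = ℓ := h2
  have dq : T.dist q (g • q) = ℓ := h1
  have dpq : T.dist p q = ℓ := by
    rw [hp, hq, dist_smul_eq hT, SimpleGraph.dist_comm]
    exact hx
  have hrev' : T.dist p (g • q) = ℓ + ℓ := by
    have := hrev
    rw [Ahead, dpq] at this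
    exact this
  -- both `q` and `g • p` lie on the segment `[p, g • q]` at distance `ℓ` from `p`
  have seg1 : T.dist p q + T.dist q (g • q) = T.dist p (g • q) := by
    rw [dpq, dq, hrev']
  have seg2 : T.dist p (g • p) + T.dist (g • p) (g • q) = T.dist p (g • q) := by
    rw [dp, dist_smul_eq hT, dpq, hrev']
  have key : q = g • p := tree_seg_unique hT.1 seg1 seg2 (by rw [dpq, dp])
  refine ⟨q, h1, ?_⟩
  have : (g * h * g * h⁻¹) • q = g • p := by
    rw [hq, hp]
    simp only [mul_smul, inv_smul_smul]
  rw [this, ← key]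
end

section
/- In BS(m,ℓ) with m = 2k even, for any integers r, s with r + s = ℓ, the element g = t aᵏ t⁻¹ aʳ t aᵏ t⁻¹ aˢ satisfies scl(g) = 0; in fact, with h = t a⁻ᵏ t⁻¹ one has g·h·g·h⁻¹ = a^{4ℓ}. -/
open scoped ENNReal commutatorElement

/-- The defining relation of the Baumslag–Solitar group `BS(m,ℓ)`:
`t aᵐ t⁻¹ aˡ⁻¹`, with `t = FreeGroup.of 0` and `a = FreeGroup.of 1`. -/
def bsRels (m l : ℤ) : Set (FreeGroup (Fin 2)) :=
  {FreeGroup.of 0 * (FreeGroup.of 1) ^ m * (FreeGroup.of 0)⁻¹ * ((FreeGroup.of 1) ^ l)⁻¹}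

/-- The Baumslag–Solitar group `BS(m,ℓ) = ⟨a, t ∣ t aᵐ t⁻¹ = aˡ⟩`. -/
def BS (m l : ℤ) : Type := PresentedGroup (bsRels m l)

instance (m l : ℤ) : Group (BS m l) := by unfold BS; infer_instance

/-- The stable letter `t` of `BS(m,ℓ)`. -/
def bst (m l : ℤ) : BS m l := PresentedGroup.of 0

/-- The generator `a` of `BS(m,ℓ)`. -/
def bsa (m l : ℤ) : BS m l := PresentedGroup.of 1

/-- The defining relation holds in `BS(m,ℓ)`. -/
theorem bs_rel (m l : ℤ) : bst m l * (bsa m l) ^ m * (bst m l)⁻¹ = (bsa m l) ^ l := by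
  have h1 : (FreeGroup.of 0 * (FreeGroup.of 1 : FreeGroup (Fin 2)) ^ m * (FreeGroup.of 0)⁻¹ *
      ((FreeGroup.of 1) ^ l)⁻¹) ∈ Subgroup.normalClosure (bsRels m l) :=
    Subgroup.subset_normalClosure rfl
  have h2 : PresentedGroup.mk (bsRels m l) (FreeGroup.of 0 * (FreeGroup.of 1) ^ m *
      (FreeGroup.of 0)⁻¹ * ((FreeGroup.of 1) ^ l)⁻¹) = 1 :=
    (QuotientGroup.eq_one_iff _).mpr h1
  have h3 : bst m l * (bsa m l) ^ m * (bst m l)⁻¹ * ((bsa m l) ^ l)⁻¹ = 1 := by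
    simp only [map_mul, map_zpow, map_inv] at h2
    exact h2
  exact mul_inv_eq_one.mp h3

/-- Abstract form of the key identity. -/
theorem bs_keyid {G : Type*} [Group G] (a b : G) (l r s : ℤ) (hb : b ^ (2:ℕ) = a ^ l)
    (hrs : r + s = l) :
    (b * a^r * b * a^s) * b⁻¹ * (b * a^r * b * a^s) * (b⁻¹)⁻¹ = a ^ (4*l) := by
  have C2 : Commute (a^r) (b^(2:ℕ)) := by
    unfold Commute SemiconjBy
    rw [hb, ← zpow_add, ← zpow_add, add_comm]
  have C6 : a^r * ((b^(2:ℕ))^(3:ℕ)) = ((b^(2:ℕ))^(3:ℕ)) * a^r := C2.pow_right 3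
  have hs : a^s = b^(2:ℕ) * (a^r)⁻¹ := by
    rw [hb, ← zpow_neg, ← zpow_add]
    congr 1; omega
  have h8 : a ^ (4*l) = ((b^(2:ℕ))^(4:ℕ)) := by
    rw [hb, ← zpow_natCast (a^l) 4, ← zpow_mul, mul_comm]; norm_num
  calc (b * a^r * b * a^s) * b⁻¹ * (b * a^r * b * a^s) * (b⁻¹)⁻¹
      = b * (a^r * (b^(2:ℕ))^(3:ℕ)) * (a^r)⁻¹ * b := by rw [hs]; group
    _ = b * ((b^(2:ℕ))^(3:ℕ) * a^r) * (a^r)⁻¹ * b := by rw [C6]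
    _ = (b^(2:ℕ))^(4:ℕ) := by group
    _ = a ^ (4*l) := h8.symm

/-- If `g h g h⁻¹ = z` with `z` commuting with `g`, then `g^{2n} = zⁿ ⁅gⁿ, h⁆`. -/
theorem bs_keypow {G : Type*} [Group G] (g h z : G) (hz : g*h*g*h⁻¹ = z) (hzg : Commute z g)
    (n : ℕ) : g ^ (2*n) = z^n * ⁅g^n, h⁆ := by
  have h1 : h * g * h⁻¹ = g⁻¹ * z := by rw [← hz]; group
  have h2 : h * g^n * h⁻¹ = g⁻¹^n * z^n := by
    rw [← conj_pow, h1, (hzg.symm.inv_left).mul_pow]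
  have h3 : h * (g^n)⁻¹ * h⁻¹ = (z^n)⁻¹ * g^n := by
    have e : h * (g^n)⁻¹ * h⁻¹ = (h * g^n * h⁻¹)⁻¹ := by group
    rw [e, h2, mul_inv_rev, inv_pow, inv_inv]
  have hc : z^n * g^n = g^n * z^n := hzg.pow_pow n n
  rw [commutatorElement_def, show g^n * h * (g^n)⁻¹ * h⁻¹ = g^n * (h * (g^n)⁻¹ * h⁻¹) by group,
    h3, show z^n * (g^n * ((z^n)⁻¹ * g^n)) = (z^n * g^n) * (z^n)⁻¹ * g^n by group, hc,
    two_mul, pow_add]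
  group

/-- In `BS(m,ℓ)` with `m = 2k` even and `r + s = ℓ`, the element
`g = t aᵏ t⁻¹ aʳ t aᵏ t⁻¹ aˢ` satisfies `g h g h⁻¹ = a^{4ℓ}` for `h = t a⁻ᵏ t⁻¹`,
and `scl(g) = 0`. -/
theorem bs_even_scl_zero (k l r s : ℤ) (hml : 2 * k ≠ l) (hrs : r + s = l) :
    (bst (2*k) l * (bsa (2*k) l) ^ k * (bst (2*k) l)⁻¹ * (bsa (2*k) l) ^ r *
        (bst (2*k) l * (bsa (2*k) l) ^ k * (bst (2*k) l)⁻¹) * (bsa (2*k) l) ^ s) *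
      (bst (2*k) l * (bsa (2*k) l) ^ (-k) * (bst (2*k) l)⁻¹) *
      (bst (2*k) l * (bsa (2*k) l) ^ k * (bst (2*k) l)⁻¹ * (bsa (2*k) l) ^ r *
        (bst (2*k) l * (bsa (2*k) l) ^ k * (bst (2*k) l)⁻¹) * (bsa (2*k) l) ^ s) *
      (bst (2*k) l * (bsa (2*k) l) ^ (-k) * (bst (2*k) l)⁻¹)⁻¹ = (bsa (2*k) l) ^ (4 * l) ∧
    scl (bst (2*k) l * (bsa (2*k) l) ^ k * (bst (2*k) l)⁻¹ * (bsa (2*k) l) ^ r *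
        (bst (2*k) l * (bsa (2*k) l) ^ k * (bst (2*k) l)⁻¹) * (bsa (2*k) l) ^ s) = 0 := by
  set t : BS (2*k) l := bst (2*k) l with ht
  set a : BS (2*k) l := bsa (2*k) l with ha
  set b : BS (2*k) l := t * a ^ k * t⁻¹ with hbdef
  -- basic facts
  have hrel : t * a ^ (2*k) * t⁻¹ = a ^ l := bs_rel (2*k) l
  have hb2 : b ^ (2:ℕ) = a ^ l := by
    rw [← hrel, hbdef, pow_two]
    group
  have hinv : t * a ^ (-k) * t⁻¹ = b⁻¹ := by rw [hbdef]; group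
  set g : BS (2*k) l := b * a ^ r * b * a ^ s with hgdef
  have hid : g * b⁻¹ * g * (b⁻¹)⁻¹ = a ^ (4*l) := bs_keyid a b l r s hb2 hrs
  constructor
  · rw [hinv]; exact hid
  -- the scl part
  have hca : ∀ j : ℤ, Commute (a ^ (4*l)) (a ^ j) := fun j => (Commute.refl a).zpow_zpow _ _
  have h8 : a ^ (4*l) = (b^(2:ℕ))^(4:ℕ) := by
    rw [hb2, ← zpow_natCast (a^l) 4, ← zpow_mul]
    norm_num [mul_comm]
  have hcb : Commute (a ^ (4*l)) b := by
    rw [h8]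
    exact ((Commute.refl b).pow_left 2).pow_left 4
  have hzg : Commute (a ^ (4*l)) g := by
    rw [hgdef]
    exact ((hcb.mul_right (hca r)).mul_right hcb).mul_right (hca s)
  have hkey := bs_keypow g b⁻¹ (a ^ (4*l)) hid hzg
  -- the single-commutator form of powers of a
  have hcomm_rel : ∀ N : ℤ, ⁅t⁻¹, a ^ (l*N)⁆ = a ^ ((2*k-l)*N) := by
    intro N
    have h1 : t * a ^ (2*k*N) * t⁻¹ = a ^ (l*N) := by
      rw [zpow_mul a (2*k) N, zpow_mul a l N, ← hrel, conj_zpow]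
    have h2 : a ^ (2*k*N) = t⁻¹ * a ^ (l*N) * t := by rw [← h1]; group
    rw [commutatorElement_def, inv_inv, show (2*k-l)*N = 2*k*N + (-(l*N)) by ring,
      zpow_add, h2, zpow_neg]
  set d : ℤ := 2*k - l with hd
  have hd0 : d ≠ 0 := by omega
  have hdpos : 1 ≤ d.natAbs := by omega
  have hds : d * d.sign = (d.natAbs : ℤ) := by
    rcases lt_trichotomy d 0 with h | h | h
    · rw [Int.sign_eq_neg_one_of_neg h]; omega
    · omega
    · rw [Int.sign_eq_one_of_pos h]; omega
  -- for each m, cl (g ^ (2 * (d.natAbs * m))) ≤ 2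
  have hcl : ∀ m : ℕ+, cl (g ^ (2 * (d.natAbs * (m:ℕ)))) ≤ 2 := by
    intro m
    set n : ℕ := d.natAbs * (m:ℕ) with hn
    set N : ℤ := d.sign * (4*l*(m:ℕ)) with hN
    have hzn : (a ^ (4*l)) ^ n = a ^ (d * N) := by
      rw [← zpow_natCast (a ^ (4*l)) n, ← zpow_mul]
      congr 1
      rw [hN, ← mul_assoc, hds, hn]
      push_cast
      ring
    have hprod : IsProdCommutators (g ^ (2*n)) 2 := by
      refine ⟨![t⁻¹, g^n], ![a ^ (l*N), b⁻¹], ?_⟩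
      have : (List.ofFn fun i => ⁅(![t⁻¹, g^n] : Fin 2 → BS (2*k) l) i,
          (![a ^ (l*N), b⁻¹] : Fin 2 → BS (2*k) l) i⁆) = [⁅t⁻¹, a ^ (l*N)⁆, ⁅g^n, b⁻¹⁆] := by
        simp [List.ofFn_succ]
      rw [this, List.prod_cons, List.prod_cons, List.prod_nil, mul_one, hcomm_rel N,
        ← hzn, hkey n]
    unfold cl
    refine sInf_le ?_
    exact ⟨2, hprod, by norm_num⟩
  -- hence scl g ≤ 2 / m for all m
  have hscl : ∀ m : ℕ+, scl g ≤ 2 / (m:ℝ≥0∞) := by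
    intro m
    have hpos : 0 < 2 * (d.natAbs * (m:ℕ)) := by positivity
    set M : ℕ+ := ⟨2 * (d.natAbs * (m:ℕ)), hpos⟩ with hM
    have h1 : scl g ≤ cl (g ^ (M:ℕ)) / ((M:ℕ):ℝ≥0∞) := by
      unfold scl; exact iInf_le _ M
    have h2 : cl (g ^ (M:ℕ)) / ((M:ℕ):ℝ≥0∞) ≤ 2 / ((M:ℕ):ℝ≥0∞) :=
      ENNReal.div_le_div_right (hcl m) _
    have h3 : (2:ℝ≥0∞) / ((M:ℕ):ℝ≥0∞) ≤ 2 / ((m:ℕ):ℝ≥0∞) := by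
      apply ENNReal.div_le_div_left
      have hmn : (m:ℕ) ≤ (M:ℕ) := by
        have hpm : 0 < (m:ℕ) := m.2
        show (m:ℕ) ≤ 2 * (d.natAbs * (m:ℕ))
        nlinarith
      exact_mod_cast hmn
    exact h1.trans (h2.trans h3)
  -- conclude scl g = 0
  by_contra h0
  have hnt : scl g ≠ ⊤ := by
    intro htop
    have h1 := hscl 1
    rw [htop] at h1
    simp at h1
  have h2t : (2:ℝ≥0∞) / scl g ≠ ⊤ := (ENNReal.div_lt_top (by norm_num) h0).ne
  obtain ⟨q, hq⟩ := ENNReal.exists_nat_gt h2t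
  have hm := hscl ⟨q+1, Nat.succ_pos q⟩
  have hq1 : (2:ℝ≥0∞) / scl g < (q+1 : ℕ) := hq.trans_le (by exact_mod_cast Nat.le_succ q)
  have hlt : (2:ℝ≥0∞) < ((q+1:ℕ):ℝ≥0∞) * scl g :=
    (ENNReal.div_lt_iff (Or.inl h0) (Or.inl hnt)).mp hq1
  have hle : ((q+1:ℕ):ℝ≥0∞) * scl g ≤ 2 := by
    calc ((q+1:ℕ):ℝ≥0∞) * scl g ≤ ((q+1:ℕ):ℝ≥0∞) * (2 / ((q+1:ℕ):ℝ≥0∞)) := by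
          exact mul_le_mul_right (by exact_mod_cast hm) _
      _ = 2 := ENNReal.mul_div_cancel (by exact_mod_cast Nat.succ_ne_zero q) (by simp)
  exact absurd (hlt.trans_le hle) (lt_irrefl _)
end
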